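/- arXiv:1203.2939 — 2 statements merged into one kernel-verified Lean document; each statement's English description precedes it below -/
import Mathlib

section
/- Let n ≥ 1 and let Z = (z_1, …, z_n) ∈ ℤ^n with z_i ≠ 0 for all i and z_i < z_{i+1}. If two Gauss diagrams G and G' are related by a single chord move, a two chord move, or a triangle move (and hence if they are related by any finite sequence of chord moves), then |A_Z(G)| = |A_Z(G')|. -/
/-! ## Gauss diagrams and parity -/

/-- `arc a b p` : position `p` lies strictly inside the arc traversed in the positive
direction from `a` to `b` on a circle whose positions are numbered `0, 1, 2, …`
in the positive direction. -/
def arc (a b p : ℕ) : Bool :=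
  if a < b then decide (a < p ∧ p < b) else decide (p < b ∨ a < p)

/-- A Gauss diagram: `n` signed oriented chords whose `2n` endpoints are placed on the
`2n` points of an oriented circle.  Chord `i` has its head (arrowhead) at position
`head i`, its foot at position `foot i`, and sign `sign i`. -/
structure GaussDiagram where
  n : ℕ
  head : Fin n → Fin (2 * n)
  foot : Fin n → Fin (2 * n)
  sign : Fin n → ℤ

namespace GaussDiagram

/-- A genuine Gauss diagram: all `2n` endpoints are distinct (hence they exhaust the
`2n` circle positions) and every sign is `±1`. -/
def Proper (G : GaussDiagram) : Prop :=
  Function.Injective (Sum.elim G.head G.foot) ∧ ∀ i, G.sign i = 1 ∨ G.sign i = -1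

/-- `G.crosses c x` : chord `x` intersects chord `c` (their endpoint pairs interleave
in the cyclic order), i.e. `x ∈ N_c`. -/
def crosses (G : GaussDiagram) (c x : Fin G.n) : Bool :=
  x != c &&
    (arc (G.head c).1 (G.foot c).1 (G.head x).1 != arc (G.head c).1 (G.foot c).1 (G.foot x).1)

/-- The intersection number `int_c(x)`: `+1` if the head of `x` lies on the arc traversed
in the positive direction from the head of `c` to the foot of `c`, and `-1` otherwise. -/
def inter (G : GaussDiagram) (c x : Fin G.n) : ℤ :=
  if arc (G.head c).1 (G.foot c).1 (G.head x).1 then 1 else -1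

/-- The parity of a chord: `p(c) = ∑_{x ∈ N_c} sgn(x) · int_c(x)`. -/
def parity (G : GaussDiagram) (c : Fin G.n) : ℤ :=
  ∑ x : Fin G.n, if G.crosses c x then G.sign x * G.inter c x else 0

end GaussDiagram

/-- The cyclic successor of a circle position. -/
def psucc {m : ℕ} (v : Fin m) : Fin m := ⟨(v.1 + 1) % m, Nat.mod_lt _ v.pos⟩

/-- Two circle positions are adjacent. -/
def adjPos {m : ℕ} (u v : Fin m) : Prop := v = psucc u ∨ u = psucc v

/-- A map of circle positions preserving the cyclic order (in particular injective). -/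
def CyclicMap {k l : ℕ} (φ : Fin k → Fin l) : Prop :=
  ∀ a b p : Fin k, arc a.1 b.1 p.1 = arc (φ a).1 (φ b).1 (φ p).1

/-- A map of circle positions reversing the cyclic order. -/
def AntiCyclicMap {k l : ℕ} (φ : Fin k → Fin l) : Prop :=
  ∀ a b p : Fin k, arc a.1 b.1 p.1 = arc (φ b).1 (φ a).1 (φ p).1

/-! ## The chord moves -/

/-- The single chord move: `G'` is obtained from `G` by inserting one chord `y` whose two
endpoints occupy adjacent positions on the circle; all old chords keep their mutual cyclic
position (via the cyclic-order preserving map `φ`), their orientation and their sign. -/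
def SingleChordMove (G G' : GaussDiagram) : Prop :=
  G.Proper ∧ G'.Proper ∧ G'.n = G.n + 1 ∧
  ∃ (e : Fin G.n → Fin G'.n) (φ : Fin (2 * G.n) → Fin (2 * G'.n)) (y : Fin G'.n),
    Function.Injective e ∧ (∀ i, e i ≠ y) ∧ CyclicMap φ ∧
    (∀ i, G'.head (e i) = φ (G.head i) ∧ G'.foot (e i) = φ (G.foot i) ∧
      G'.sign (e i) = G.sign i) ∧
    adjPos (G'.head y) (G'.foot y)

/-- The two chord move: `G'` is obtained from `G` by inserting a pair of oppositely signed
chords `y₁, y₂` whose heads occupy adjacent positions and whose feet occupy adjacent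
positions on the circle. -/
def TwoChordMove (G G' : GaussDiagram) : Prop :=
  G.Proper ∧ G'.Proper ∧ G'.n = G.n + 2 ∧
  ∃ (e : Fin G.n → Fin G'.n) (φ : Fin (2 * G.n) → Fin (2 * G'.n)) (y₁ y₂ : Fin G'.n),
    Function.Injective e ∧ y₁ ≠ y₂ ∧ (∀ i, e i ≠ y₁ ∧ e i ≠ y₂) ∧ CyclicMap φ ∧
    (∀ i, G'.head (e i) = φ (G.head i) ∧ G'.foot (e i) = φ (G.foot i) ∧
      G'.sign (e i) = G.sign i) ∧
    adjPos (G'.head y₁) (G'.head y₂) ∧ adjPos (G'.foot y₁) (G'.foot y₂) ∧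
    G'.sign y₁ = -G'.sign y₂

/-- The triangle (vertex) structure of three chords `x y z` of `G`: their six endpoints
form three pairs of adjacent circle positions (the vertices of a triangle), namely
`{w₁, w₁+1}` (two heads), `{w₂, w₂+1}` (two feet) and `{w₃, w₃+1}` (a head and a foot).
Chord `x` runs from the head–head vertex to the foot–foot vertex. -/
def TriangleVertices (G : GaussDiagram) (x y z : Fin G.n) (w₁ w₂ w₃ : Fin (2 * G.n)) : Prop :=
  x ≠ y ∧ y ≠ z ∧ x ≠ z ∧
  ((G.head x = w₁ ∧ G.head y = psucc w₁) ∨ (G.head x = psucc w₁ ∧ G.head y = w₁)) ∧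
  ((G.foot x = w₂ ∧ G.foot z = psucc w₂) ∨ (G.foot x = psucc w₂ ∧ G.foot z = w₂)) ∧
  ((G.foot y = w₃ ∧ G.head z = psucc w₃) ∨ (G.foot y = psucc w₃ ∧ G.head z = w₃))

/-- The admissible sign configurations for a triangle move on the chords `x y z`
(`x` being the chord joining the head–head vertex to the foot–foot vertex):
these are the configurations exhibited in the paper together with their modifications
obtained by simultaneously reversing the sign and orientation of the two chords meeting
at the head–head vertex or at the foot–foot vertex.
In the (3,0) case the two chords `y, z` carry one sign and `x` the opposite sign; in the
(2,1) case the signs are governed by the pair of chords crossing on the one-intersection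
side of the move. -/
def AdmissibleSigns (G G' : GaussDiagram) (x y z : Fin G.n) (x' y' z' : Fin G'.n) : Prop :=
  -- (3,0) triangle move
  (((G.crosses x y = false ∧ G.crosses y z = false ∧ G.crosses x z = false) ∨
    (G'.crosses x' y' = false ∧ G'.crosses y' z' = false ∧ G'.crosses x' z' = false)) ∧
    G.sign y = G.sign z ∧ G.sign x = -G.sign y) ∨
  -- (2,1) triangle move, the single intersection being between x and y
  (((G.crosses x y = true ∧ G.crosses y z = false ∧ G.crosses x z = false) ∨
    (G'.crosses x' y' = true ∧ G'.crosses y' z' = false ∧ G'.crosses x' z' = false)) ∧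
    G.sign y = -G.sign x ∧ G.sign z = G.sign x) ∨
  -- (2,1) triangle move, the single intersection being between x and z
  (((G.crosses x z = true ∧ G.crosses x y = false ∧ G.crosses y z = false) ∨
    (G'.crosses x' z' = true ∧ G'.crosses x' y' = false ∧ G'.crosses y' z' = false)) ∧
    G.sign z = -G.sign x ∧ G.sign y = G.sign x) ∨
  -- (2,1) triangle move, the single intersection being between y and z
  (((G.crosses y z = true ∧ G.crosses x y = false ∧ G.crosses x z = false) ∨
    (G'.crosses y' z' = true ∧ G'.crosses x' y' = false ∧ G'.crosses x' z' = false)) ∧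
    G.sign y = G.sign x ∧ G.sign z = G.sign x)

/-- The triangle move: three chords `x y z` of `G` forming a triangle with three
adjacent-position vertices (one head–head, one foot–foot, one mixed), in an admissible
sign/orientation configuration, slide past each other: in `G'` each pair of adjacent
endpoints has been interchanged, while everything else is unchanged. -/
def TriangleMove (G G' : GaussDiagram) : Prop :=
  G.Proper ∧ G'.Proper ∧
  ∃ (e : Fin G.n → Fin G'.n) (φ : Fin (2 * G.n) → Fin (2 * G'.n))
    (x y z : Fin G.n) (w₁ w₂ w₃ : Fin (2 * G.n)),
    Function.Bijective e ∧ Function.Bijective φ ∧ CyclicMap φ ∧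
    TriangleVertices G x y z w₁ w₂ w₃ ∧
    (∀ i, G'.sign (e i) = G.sign i) ∧
    (∀ i, i ≠ x → i ≠ y → i ≠ z →
      G'.head (e i) = φ (G.head i) ∧ G'.foot (e i) = φ (G.foot i)) ∧
    -- sliding: each of the six endpoints is exchanged with its partner in its vertex pair
    ((G'.head (e x) = φ (G.head y) ∧ G'.head (e y) = φ (G.head x)) ∧
     (G'.foot (e x) = φ (G.foot z) ∧ G'.foot (e z) = φ (G.foot x)) ∧
     (G'.foot (e y) = φ (G.head z) ∧ G'.head (e z) = φ (G.foot y))) ∧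
    AdmissibleSigns G G' x y z (e x) (e y) (e z)

/-- One chord move (in either direction) between Gauss diagrams. -/
def GaussMove (G G' : GaussDiagram) : Prop :=
  SingleChordMove G G' ∨ SingleChordMove G' G ∨
  TwoChordMove G G' ∨ TwoChordMove G' G ∨
  TriangleMove G G' ∨ TriangleMove G' G

/-! ## Invariants from parity -/

namespace GaussDiagram

/-- `|A_i(G)|`: the signed cardinality of the set of chords of parity `i`. -/
def cardA (G : GaussDiagram) (i : ℤ) : ℤ :=
  ∑ c : Fin G.n, if G.parity c = i then G.sign c else 0

/-- `|A_Z(G)|`: the signed cardinality of the set of tuples of chords with parities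
prescribed by `Z`. -/
def cardATuple (G : GaussDiagram) {k : ℕ} (Z : Fin k → ℤ) : ℤ :=
  ∑ t : Fin k → Fin G.n,
    if ∀ j, G.parity (t j) = Z j then ∏ j, G.sign (t j) else 0

/-- `|V_i(G)|`: the signed cardinality of the set of chords whose parity has absolute
value `i`. -/
def cardV (G : GaussDiagram) (i : ℤ) : ℤ :=
  ∑ c : Fin G.n, if |G.parity c| = i then G.sign c else 0

/-- `|V_Z(G)|`: the signed cardinality of the set of tuples of chords whose parities have
absolute values prescribed by `Z`. -/
def cardVTuple (G : GaussDiagram) {k : ℕ} (Z : Fin k → ℤ) : ℤ :=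
  ∑ t : Fin k → Fin G.n,
    if ∀ j, |G.parity (t j)| = Z j then ∏ j, G.sign (t j) else 0

/-- Flip (reverse the orientation of and negate the sign of) every chord in `S`;
this corresponds to crossing changes in the corresponding virtual knot diagram. -/
def flipSet (G : GaussDiagram) (S : Finset (Fin G.n)) : GaussDiagram where
  n := G.n
  head := fun i => if i ∈ S then G.foot i else G.head i
  foot := fun i => if i ∈ S then G.head i else G.foot i
  sign := fun i => if i ∈ S then -G.sign i else G.sign i

end GaussDiagram

/-! ## Smoothing and flat diagrams -/

/-- The chord of the smaller diagram indexed by `i` corresponds to the chord `skipAt x i`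
of the original diagram (skipping the smoothed chord `x`). -/
def skipAt {n : ℕ} (x : Fin n) (i : Fin (n - 1)) : Fin n :=
  if h : i.1 < x.1 then ⟨i.1, lt_trans h x.2⟩ else ⟨i.1 + 1, by have := i.2; omega⟩

/-- Relabelling of the circle positions after vertically smoothing the chord with head at
position `h` and foot at position `f` (on a circle with `m` positions): the two positions
`h` and `f` are deleted and the arc strictly between `h` and `f` is reversed. -/
def smoothPos (m h f p : ℕ) : ℕ :=
  let d := (f + m - (h + 1)) % m
  let r := (p + m - (h + 1)) % m
  if r < d then d - 1 - r else r - 1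

/-- Vertical smoothing of the chord `x` of a Gauss diagram: the chord `x` is deleted and
the cyclic order of the arc of endpoints lying strictly between the two endpoints of `x`
is reversed. -/
def GaussDiagram.smooth (G : GaussDiagram) (x : Fin G.n) : GaussDiagram where
  n := G.n - 1
  head := fun i =>
    ⟨smoothPos (2 * G.n) (G.head x).1 (G.foot x).1 (G.head (skipAt x i)).1 % (2 * (G.n - 1)),
      Nat.mod_lt _ (by have := i.2; omega)⟩
  foot := fun i =>
    ⟨smoothPos (2 * G.n) (G.head x).1 (G.foot x).1 (G.foot (skipAt x i)).1 % (2 * (G.n - 1)),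
      Nat.mod_lt _ (by have := i.2; omega)⟩
  sign := fun i => G.sign (skipAt x i)

/-- The index of chord `i ≠ x` in the diagram obtained by smoothing the chord `x`. -/
def unskip? {n : ℕ} (x i : Fin n) : Option (Fin (n - 1)) :=
  if h : i.1 < x.1 then some ⟨i.1, by have := x.2; omega⟩
  else if h' : x.1 < i.1 then some ⟨i.1 - 1, by have := i.2; omega⟩
  else none

/-- Smoothing a list of chords, one after the other. -/
def GaussDiagram.smoothList : (G : GaussDiagram) → List (Fin G.n) → GaussDiagram
  | G, [] => G
  | G, x :: xs => (G.smooth x).smoothList (xs.filterMap (unskip? x))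
termination_by G l => l.length
decreasing_by simpa using Nat.lt_succ_of_le (List.length_filterMap_le _ _)

/-- A flat Gauss diagram: a chord diagram on the circle with no signs and no head/foot
designations. -/
structure FlatDiagram where
  n : ℕ
  fst : Fin n → Fin (2 * n)
  snd : Fin n → Fin (2 * n)

namespace FlatDiagram

/-- A genuine flat diagram: the `2n` endpoints are distinct. -/
def Proper (F : FlatDiagram) : Prop := Function.Injective (Sum.elim F.fst F.snd)

/-- The (unordered) endpoints of the chord `y` are `u` and `v`. -/
def hasEnds (F : FlatDiagram) (y : Fin F.n) (u v : Fin (2 * F.n)) : Prop :=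
  (F.fst y = u ∧ F.snd y = v) ∨ (F.fst y = v ∧ F.snd y = u)

end FlatDiagram

/-- Forgetting all signs and head/foot designations of a Gauss diagram. -/
def GaussDiagram.flatten (G : GaussDiagram) : FlatDiagram := ⟨G.n, G.head, G.foot⟩

/-- Isomorphism of flat diagrams: a bijection of chords induced by a bijection of the
circle preserving (or reversing) the cyclic order. -/
def FlatIso (F F' : FlatDiagram) : Prop :=
  ∃ (e : Fin F.n → Fin F'.n) (φ : Fin (2 * F.n) → Fin (2 * F'.n)),
    Function.Bijective e ∧ Function.Bijective φ ∧ (CyclicMap φ ∨ AntiCyclicMap φ) ∧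
    ∀ i, F'.hasEnds (e i) (φ (F.fst i)) (φ (F.snd i))

/-- Flat single chord move: insertion of a chord with adjacent endpoints. -/
def FlatSingleMove (F F' : FlatDiagram) : Prop :=
  F.Proper ∧ F'.Proper ∧ F'.n = F.n + 1 ∧
  ∃ (e : Fin F.n → Fin F'.n) (φ : Fin (2 * F.n) → Fin (2 * F'.n)) (y : Fin F'.n),
    Function.Injective e ∧ (∀ i, e i ≠ y) ∧ CyclicMap φ ∧
    (∀ i, F'.hasEnds (e i) (φ (F.fst i)) (φ (F.snd i))) ∧
    adjPos (F'.fst y) (F'.snd y)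

/-- Flat two chord move: insertion of a parallel pair of chords with pairwise adjacent
endpoints. -/
def FlatTwoMove (F F' : FlatDiagram) : Prop :=
  F.Proper ∧ F'.Proper ∧ F'.n = F.n + 2 ∧
  ∃ (e : Fin F.n → Fin F'.n) (φ : Fin (2 * F.n) → Fin (2 * F'.n)) (y₁ y₂ : Fin F'.n)
    (p q : Fin (2 * F'.n)),
    Function.Injective e ∧ y₁ ≠ y₂ ∧ (∀ i, e i ≠ y₁ ∧ e i ≠ y₂) ∧ CyclicMap φ ∧
    (∀ i, F'.hasEnds (e i) (φ (F.fst i)) (φ (F.snd i))) ∧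
    F'.hasEnds y₁ p q ∧ F'.hasEnds y₂ (psucc p) (psucc q)

/-- Flat triangle move: three chords whose six endpoints form three adjacent-position
vertex pairs slide past each other (no sign or orientation conditions). -/
def FlatTriangleMove (F F' : FlatDiagram) : Prop :=
  F.Proper ∧ F'.Proper ∧
  ∃ (e : Fin F.n → Fin F'.n) (φ : Fin (2 * F.n) → Fin (2 * F'.n))
    (x y z : Fin F.n) (w₁ w₂ w₃ α₁ β₁ α₂ β₂ α₃ β₃ : Fin (2 * F.n)),
    Function.Bijective e ∧ Function.Bijective φ ∧ CyclicMap φ ∧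
    x ≠ y ∧ y ≠ z ∧ x ≠ z ∧
    ((α₁ = w₁ ∧ β₁ = psucc w₁) ∨ (α₁ = psucc w₁ ∧ β₁ = w₁)) ∧
    ((α₂ = w₂ ∧ β₂ = psucc w₂) ∨ (α₂ = psucc w₂ ∧ β₂ = w₂)) ∧
    ((α₃ = w₃ ∧ β₃ = psucc w₃) ∨ (α₃ = psucc w₃ ∧ β₃ = w₃)) ∧
    F.hasEnds x α₁ α₂ ∧ F.hasEnds y β₁ α₃ ∧ F.hasEnds z β₂ β₃ ∧
    F'.hasEnds (e x) (φ β₁) (φ β₂) ∧ F'.hasEnds (e y) (φ α₁) (φ β₃) ∧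
    F'.hasEnds (e z) (φ α₂) (φ α₃) ∧
    (∀ i, i ≠ x → i ≠ y → i ≠ z → F'.hasEnds (e i) (φ (F.fst i)) (φ (F.snd i)))

/-- Generating relation for flat equivalence of flat diagrams. -/
def FlatRel (F F' : FlatDiagram) : Prop :=
  FlatIso F F' ∨ FlatSingleMove F F' ∨ FlatSingleMove F' F ∨
  FlatTwoMove F F' ∨ FlatTwoMove F' F ∨ FlatTriangleMove F F' ∨ FlatTriangleMove F' F

/-- Flat equivalence classes of flat Gauss diagrams. -/
def FlatClass : Type := Quot FlatRel

/-- The flat equivalence class of a flat diagram. -/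
def Fclass (F : FlatDiagram) : FlatClass := Quot.mk _ F

/-! ## The invariants `S_i` and `S_Z` -/

/-- `S_i(G) = ∑_{x ∈ V_i(G)} sgn(x) · F(G^x)`, an element of the free ℤ-module on flat
equivalence classes of flat Gauss diagrams. -/
noncomputable def Sone (G : GaussDiagram) (i : ℤ) : FlatClass →₀ ℤ :=
  ∑ x : Fin G.n,
    if |G.parity x| = i then
      Finsupp.single (Fclass (G.smooth x).flatten) (G.sign x)
    else 0

/-- `S_Z(G) = ∑_{x̄ ∈ V_Z(G)} sgn(x₁)⋯sgn(x_n) · F(G^{x̄})`, an element of the free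
ℤ-module on flat equivalence classes of flat Gauss diagrams. -/
noncomputable def SZ (G : GaussDiagram) {k : ℕ} (Z : Fin k → ℤ) : FlatClass →₀ ℤ :=
  ∑ t : Fin k → Fin G.n,
    if ∀ j, |G.parity (t j)| = Z j then
      Finsupp.single (Fclass (G.smoothList (List.ofFn t)).flatten) (∏ j, G.sign (t j))
    else 0

namespace GDAux

def arcP (a b p : ℕ) : Prop := (a < b ∧ a < p ∧ p < b) ∨ (b ≤ a ∧ (p < b ∨ a < p))
instance (a b p : ℕ) : Decidable (arcP a b p) := by unfold arcP; exact inferInstance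
lemma arc_eq_decide (a b p : ℕ) : arc a b p = decide (arcP a b p) := by
  unfold arc; split_ifs with h <;> rw [decide_eq_decide] <;> unfold arcP <;> omega
lemma arc_eq_arc_iff {a b p a' b' p' : ℕ} :
    arc a b p = arc a' b' p' ↔ (arcP a b p ↔ arcP a' b' p') := by
  rw [arc_eq_decide, arc_eq_decide, decide_eq_decide]

def ind (P : Prop) [Decidable P] : ℤ := if P then 1 else 0
lemma ind_congr {P Q : Prop} [Decidable P] [Decidable Q] (h : P ↔ Q) : ind P = ind Q := by
  unfold ind; split_ifs <;> tauto

def mterm (s : ℤ) (a b c d : ℕ) : ℤ := s * (ind (arcP a b c) - ind (arcP a b d))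
def crP (a b c d : ℕ) : Prop := ¬ (arcP a b c ↔ arcP a b d)

lemma mterm_congr {a b c d a' b' c' d' : ℕ} (s : ℤ)
    (h1 : arc a b c = arc a' b' c') (h2 : arc a b d = arc a' b' d') :
    mterm s a b c d = mterm s a' b' c' d' := by
  rw [arc_eq_arc_iff] at h1 h2
  unfold mterm; rw [ind_congr h1, ind_congr h2]
lemma mterm_self (s : ℤ) (a b : ℕ) : mterm s a b a b = 0 := by
  unfold mterm ind; split_ifs <;> simp only [arcP] at * <;> omega
lemma mterm_zero_of_arc_eq {a b c d : ℕ} (s : ℤ) (h : arc a b c = arc a b d) :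
    mterm s a b c d = 0 := by
  rw [arc_eq_arc_iff] at h; unfold mterm; rw [ind_congr h]; ring
lemma mterm_neg (s : ℤ) (a b c d : ℕ) : mterm (-s) a b c d = -(mterm s a b c d) := by
  unfold mterm; ring

/-- directed adjacency on the `m`-point circle -/
def nadj (m a b : ℕ) : Prop := (b = a + 1 ∧ b < m) ∨ (a + 1 = m ∧ b = 0)
lemma nadj_psucc {m : ℕ} (v : Fin m) : nadj m v.1 (psucc v).1 := by
  have hv := v.2
  unfold nadj psucc
  rcases Nat.lt_or_ge (v.1 + 1) m with h | h
  · left; simp [Nat.mod_eq_of_lt h, h]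
  · right
    have hm : v.1 + 1 = m := by omega
    simp [hm]

lemma arc_pt_shift {m a b q q' : ℕ} (hm : nadj m q q' ∨ nadj m q' q) (ha : a < m) (hb : b < m)
    (h1 : a ≠ q) (h2 : a ≠ q') (h3 : b ≠ q) (h4 : b ≠ q') : arc a b q = arc a b q' := by
  rw [arc_eq_arc_iff]; unfold arcP; unfold nadj at hm; omega
lemma arc_left_shift {m a a' b q : ℕ} (hm : nadj m a a' ∨ nadj m a' a) (hb : b < m) (hq : q < m)
    (h1 : b ≠ a) (h2 : b ≠ a') (h3 : q ≠ a) (h4 : q ≠ a') : arc a b q = arc a' b q := by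
  rw [arc_eq_arc_iff]; unfold arcP; unfold nadj at hm; omega
lemma arc_right_shift {m a b b' q : ℕ} (hm : nadj m b b' ∨ nadj m b' b) (ha : a < m) (hq : q < m)
    (h1 : a ≠ b) (h2 : a ≠ b') (h3 : q ≠ b) (h4 : q ≠ b') : arc a b q = arc a b' q := by
  rw [arc_eq_arc_iff]; unfold arcP; unfold nadj at hm; omega
lemma arc_nadj_const {m a b q q' : ℕ} (hm : nadj m a b ∨ nadj m b a) (hq : q < m) (hq' : q' < m)
    (h1 : q ≠ a) (h2 : q ≠ b) (h3 : q' ≠ a) (h4 : q' ≠ b) : arc a b q = arc a b q' := by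
  rw [arc_eq_arc_iff]; unfold arcP; unfold nadj at hm; omega

/-- rotation of the circle sending `k` to `0` -/
def rotN (m k p : ℕ) : ℕ := if p < k then p + m - k else p - k
lemma rotN_lt {m k p : ℕ} (hk : k < m) (hp : p < m) : rotN m k p < m := by
  unfold rotN; split_ifs <;> omega
lemma rotN_inj {m k a b : ℕ} (hk : k < m) (ha : a < m) (hb : b < m)
    (h : rotN m k a = rotN m k b) : a = b := by
  unfold rotN at h; split_ifs at h <;> omega
lemma arc_rotN {m k a b p : ℕ} (hk : k < m) (ha : a < m) (hb : b < m) (hp : p < m) :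
    arc (rotN m k a) (rotN m k b) (rotN m k p) = arc a b p := by
  rw [arc_eq_arc_iff]; unfold arcP rotN; split_ifs <;> omega
lemma rotN_self (m k : ℕ) : rotN m k k = 0 := by unfold rotN; simp
lemma rotN_nadj {m k a b : ℕ} (hk : k < m) (ha : a < m) (hm : nadj m a b) (hbk : b ≠ k) :
    rotN m k b = rotN m k a + 1 := by
  unfold rotN; unfold nadj at hm; split_ifs <;> omega

lemma two_mutual {a a' b b' : ℕ} (s : ℤ)
    (d1 : a ≠ a') (d2 : a ≠ b) (d3 : a ≠ b') (d4 : a' ≠ b) (d5 : a' ≠ b') (d6 : b ≠ b') :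
    mterm (-s) a b a' b' = mterm s a' b' a b := by
  unfold mterm ind
  split_ifs <;> simp only [arcP] at * <;> omega

end GDAux

namespace GDAux
open GaussDiagram

/-! ### Bridging Gauss diagram notions to the arithmetic toolbox -/

lemma contrib_eq (G : GaussDiagram) (c t : Fin G.n) :
    (if G.crosses c t then G.sign t * G.inter c t else 0)
      = mterm (G.sign t) (G.head c).1 (G.foot c).1 (G.head t).1 (G.foot t).1 := by
  by_cases h : t = c
  · subst h
    simp [GaussDiagram.crosses, mterm_self]
  · unfold GaussDiagram.crosses GaussDiagram.inter
    by_cases hP : arcP (G.head c).1 (G.foot c).1 (G.head t).1 <;>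
      by_cases hQ : arcP (G.head c).1 (G.foot c).1 (G.foot t).1 <;>
        simp [arc_eq_decide, h, hP, hQ, mterm, ind] <;> ring

lemma parity_eq (G : GaussDiagram) (c : Fin G.n) :
    G.parity c
      = ∑ t : Fin G.n, mterm (G.sign t) (G.head c).1 (G.foot c).1 (G.head t).1 (G.foot t).1 :=
  Finset.sum_congr rfl (fun t _ => contrib_eq G c t)

lemma crosses_eq_cross4 (G : GaussDiagram) {c t : Fin G.n} (h : t ≠ c) :
    G.crosses c t
      = (arc (G.head c).1 (G.foot c).1 (G.head t).1 != arc (G.head c).1 (G.foot c).1 (G.foot t).1) := by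
  unfold GaussDiagram.crosses
  simp [h]

lemma cross4_true_iff {a b c d : ℕ} : (arc a b c != arc a b d) = true ↔ crP a b c d := by
  rw [arc_eq_decide, arc_eq_decide]
  unfold crP
  rcases Classical.em (arcP a b c) with h1 | h1 <;> rcases Classical.em (arcP a b d) with h2 | h2 <;>
    simp [h1, h2]
lemma cross4_false_iff {a b c d : ℕ} : (arc a b c != arc a b d) = false ↔ ¬ crP a b c d := by
  rw [← cross4_true_iff]
  simp

/-! ### Properness facts -/

lemma head_ne_head {G : GaussDiagram} (hG : G.Proper) {i j : Fin G.n} (h : i ≠ j) :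
    (G.head i).1 ≠ (G.head j).1 := by
  intro hv
  have := hG.1 (a₁ := Sum.inl i) (a₂ := Sum.inl j) (by simpa using Fin.val_injective hv)
  simp at this; exact h this
lemma foot_ne_foot {G : GaussDiagram} (hG : G.Proper) {i j : Fin G.n} (h : i ≠ j) :
    (G.foot i).1 ≠ (G.foot j).1 := by
  intro hv
  have := hG.1 (a₁ := Sum.inr i) (a₂ := Sum.inr j) (by simpa using Fin.val_injective hv)
  simp at this; exact h this
lemma head_ne_foot {G : GaussDiagram} (hG : G.Proper) (i j : Fin G.n) :
    (G.head i).1 ≠ (G.foot j).1 := by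
  intro hv
  have := hG.1 (a₁ := Sum.inl i) (a₂ := Sum.inr j) (by simpa using Fin.val_injective hv)
  simp at this

end GDAux

namespace GDAux
open GaussDiagram
lemma crP_congr {a b c d a' b' c' d' : ℕ}
    (h1 : arc a b c = arc a' b' c') (h2 : arc a b d = arc a' b' d') :
    crP a b c d ↔ crP a' b' c' d' := by
  rw [arc_eq_arc_iff] at h1 h2; unfold crP; tauto
lemma crosses_false_iff (G : GaussDiagram) {c t : Fin G.n} (h : t ≠ c) :
    G.crosses c t = false
      ↔ ¬ crP (G.head c).1 (G.foot c).1 (G.head t).1 (G.foot t).1 := by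
  rw [crosses_eq_cross4 G h, cross4_false_iff]
lemma crosses_true_iff (G : GaussDiagram) {c t : Fin G.n} (h : t ≠ c) :
    G.crosses c t = true
      ↔ crP (G.head c).1 (G.foot c).1 (G.head t).1 (G.foot t).1 := by
  rw [crosses_eq_cross4 G h, cross4_true_iff]
end GDAux

namespace GDAux
set_option maxHeartbeats 1000000 in
/-- Core computation for the triangle move, in rotated coordinates. -/
lemma triangle_core {hx hy fx fz fy hz : ℕ} {sx sy sz : ℤ}
    (h1 : (hx = 0 ∧ hy = 1) ∨ (hy = 0 ∧ hx = 1))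
    (h2 : fz = fx + 1 ∨ fx = fz + 1)
    (h3 : hz = fy + 1 ∨ fy = hz + 1)
    (d1 : 2 ≤ fx) (d2 : 2 ≤ fz) (d3 : 2 ≤ fy) (d4 : 2 ≤ hz)
    (d5 : fx ≠ fy) (d6 : fx ≠ hz) (d7 : fz ≠ fy) (d8 : fz ≠ hz)
    (hadm :
      (((¬crP hx fx hy fy ∧ ¬crP hy fy hz fz ∧ ¬crP hx fx hz fz) ∨
        (¬crP hy fz hx hz ∧ ¬crP hx hz fy fx ∧ ¬crP hy fz fy fx)) ∧
        sy = sz ∧ sx = -sy) ∨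
      (((crP hx fx hy fy ∧ ¬crP hy fy hz fz ∧ ¬crP hx fx hz fz) ∨
        (crP hy fz hx hz ∧ ¬crP hx hz fy fx ∧ ¬crP hy fz fy fx)) ∧
        sy = -sx ∧ sz = sx) ∨
      (((crP hx fx hz fz ∧ ¬crP hx fx hy fy ∧ ¬crP hy fy hz fz) ∨
        (crP hy fz fy fx ∧ ¬crP hy fz hx hz ∧ ¬crP hx hz fy fx)) ∧
        sz = -sx ∧ sy = sx) ∨
      (((crP hy fy hz fz ∧ ¬crP hx fx hy fy ∧ ¬crP hx fx hz fz) ∨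
        (crP hx hz fy fx ∧ ¬crP hy fz hx hz ∧ ¬crP hy fz fy fx)) ∧
        sy = sx ∧ sz = sx)) :
    (mterm sy hx fx hy fy + mterm sz hx fx hz fz
      = mterm sy hy fz hx hz + mterm sz hy fz fy fx) ∧
    (mterm sx hy fy hx fx + mterm sz hy fy hz fz
      = mterm sx hx hz hy fz + mterm sz hx hz fy fx) ∧
    (mterm sx hz fz hx fx + mterm sy hz fz hy fy
      = mterm sx fy fx hy fz + mterm sy fy fx hx hz) := by
  rcases h1 with ⟨rfl, rfl⟩ | ⟨rfl, rfl⟩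
  · rcases h2 with rfl | rfl
    · rcases h3 with rfl | rfl
      · rcases Nat.lt_or_ge fx fy with ho | ho
        · rcases hadm with ⟨hc, s1, s2⟩ | ⟨hc, s1, s2⟩ | ⟨hc, s1, s2⟩ | ⟨hc, s1, s2⟩
          · exact absurd hc (by unfold crP arcP; omega)
          · exact absurd hc (by unfold crP arcP; omega)
          · have A0 : arcP (0) (fx) (1) := by unfold arcP; omega
            have A1 : ¬ arcP (0) (fx) (fy) := by unfold arcP; omega
            have A2 : ¬ arcP (0) (fx) (fy + 1) := by unfold arcP; omega
            have A3 : ¬ arcP (0) (fx) (fx + 1) := by unfold arcP; omega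
            have A4 : ¬ arcP (1) (fx + 1) (0) := by unfold arcP; omega
            have A5 : ¬ arcP (1) (fx + 1) (fy + 1) := by unfold arcP; omega
            have A6 : ¬ arcP (1) (fx + 1) (fy) := by unfold arcP; omega
            have A7 : arcP (1) (fx + 1) (fx) := by unfold arcP; omega
            have A8 : ¬ arcP (1) (fy) (0) := by unfold arcP; omega
            have A9 : arcP (1) (fy) (fx) := by unfold arcP; omega
            have A10 : ¬ arcP (1) (fy) (fy + 1) := by unfold arcP; omega
            have A11 : arcP (1) (fy) (fx + 1) := by unfold arcP; omega
            have A12 : arcP (0) (fy + 1) (1) := by unfold arcP; omega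
            have A13 : arcP (0) (fy + 1) (fx + 1) := by unfold arcP; omega
            have A14 : arcP (0) (fy + 1) (fy) := by unfold arcP; omega
            have A15 : arcP (0) (fy + 1) (fx) := by unfold arcP; omega
            have A16 : arcP (fy + 1) (fx + 1) (0) := by unfold arcP; omega
            have A17 : arcP (fy + 1) (fx + 1) (fx) := by unfold arcP; omega
            have A18 : arcP (fy + 1) (fx + 1) (1) := by unfold arcP; omega
            have A19 : ¬ arcP (fy + 1) (fx + 1) (fy) := by unfold arcP; omega
            have A20 : arcP (fy) (fx) (1) := by unfold arcP; omega
            have A21 : ¬ arcP (fy) (fx) (fx + 1) := by unfold arcP; omega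
            have A22 : arcP (fy) (fx) (0) := by unfold arcP; omega
            have A23 : arcP (fy) (fx) (fy + 1) := by unfold arcP; omega
            refine ⟨?_, ?_, ?_⟩ <;> (simp [mterm, ind, A0, A1, A2, A3, A4, A5, A6, A7, A8, A9, A10, A11, A12, A13, A14, A15, A16, A17, A18, A19, A20, A21, A22, A23]; linarith)
          · exact absurd hc (by unfold crP arcP; omega)
        · rcases hadm with ⟨hc, s1, s2⟩ | ⟨hc, s1, s2⟩ | ⟨hc, s1, s2⟩ | ⟨hc, s1, s2⟩
          · exact absurd hc (by unfold crP arcP; omega)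
          · exact absurd hc (by unfold crP arcP; omega)
          · have A0 : arcP (0) (fx) (1) := by unfold arcP; omega
            have A1 : arcP (0) (fx) (fy) := by unfold arcP; omega
            have A2 : arcP (0) (fx) (fy + 1) := by unfold arcP; omega
            have A3 : ¬ arcP (0) (fx) (fx + 1) := by unfold arcP; omega
            have A4 : ¬ arcP (1) (fx + 1) (0) := by unfold arcP; omega
            have A5 : arcP (1) (fx + 1) (fy + 1) := by unfold arcP; omega
            have A6 : arcP (1) (fx + 1) (fy) := by unfold arcP; omega
            have A7 : arcP (1) (fx + 1) (fx) := by unfold arcP; omega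
            have A8 : ¬ arcP (1) (fy) (0) := by unfold arcP; omega
            have A9 : ¬ arcP (1) (fy) (fx) := by unfold arcP; omega
            have A10 : ¬ arcP (1) (fy) (fy + 1) := by unfold arcP; omega
            have A11 : ¬ arcP (1) (fy) (fx + 1) := by unfold arcP; omega
            have A12 : arcP (0) (fy + 1) (1) := by unfold arcP; omega
            have A13 : ¬ arcP (0) (fy + 1) (fx + 1) := by unfold arcP; omega
            have A14 : arcP (0) (fy + 1) (fy) := by unfold arcP; omega
            have A15 : ¬ arcP (0) (fy + 1) (fx) := by unfold arcP; omega
            have A16 : ¬ arcP (fy + 1) (fx + 1) (0) := by unfold arcP; omega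
            have A17 : arcP (fy + 1) (fx + 1) (fx) := by unfold arcP; omega
            have A18 : ¬ arcP (fy + 1) (fx + 1) (1) := by unfold arcP; omega
            have A19 : ¬ arcP (fy + 1) (fx + 1) (fy) := by unfold arcP; omega
            have A20 : ¬ arcP (fy) (fx) (1) := by unfold arcP; omega
            have A21 : ¬ arcP (fy) (fx) (fx + 1) := by unfold arcP; omega
            have A22 : ¬ arcP (fy) (fx) (0) := by unfold arcP; omega
            have A23 : arcP (fy) (fx) (fy + 1) := by unfold arcP; omega
            refine ⟨?_, ?_, ?_⟩ <;> (simp [mterm, ind, A0, A1, A2, A3, A4, A5, A6, A7, A8, A9, A10, A11, A12, A13, A14, A15, A16, A17, A18, A19, A20, A21, A22, A23]; linarith)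
          · exact absurd hc (by unfold crP arcP; omega)
      · rcases Nat.lt_or_ge fx hz with ho | ho
        · rcases hadm with ⟨hc, s1, s2⟩ | ⟨hc, s1, s2⟩ | ⟨hc, s1, s2⟩ | ⟨hc, s1, s2⟩
          · exact absurd hc (by unfold crP arcP; omega)
          · have A0 : arcP (0) (fx) (1) := by unfold arcP; omega
            have A1 : ¬ arcP (0) (fx) (hz + 1) := by unfold arcP; omega
            have A2 : ¬ arcP (0) (fx) (hz) := by unfold arcP; omega
            have A3 : ¬ arcP (0) (fx) (fx + 1) := by unfold arcP; omega
            have A4 : ¬ arcP (1) (fx + 1) (0) := by unfold arcP; omega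
            have A5 : ¬ arcP (1) (fx + 1) (hz) := by unfold arcP; omega
            have A6 : ¬ arcP (1) (fx + 1) (hz + 1) := by unfold arcP; omega
            have A7 : arcP (1) (fx + 1) (fx) := by unfold arcP; omega
            have A8 : ¬ arcP (1) (hz + 1) (0) := by unfold arcP; omega
            have A9 : arcP (1) (hz + 1) (fx) := by unfold arcP; omega
            have A10 : arcP (1) (hz + 1) (hz) := by unfold arcP; omega
            have A11 : arcP (1) (hz + 1) (fx + 1) := by unfold arcP; omega
            have A12 : arcP (0) (hz) (1) := by unfold arcP; omega
            have A13 : arcP (0) (hz) (fx + 1) := by unfold arcP; omega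
            have A14 : ¬ arcP (0) (hz) (hz + 1) := by unfold arcP; omega
            have A15 : arcP (0) (hz) (fx) := by unfold arcP; omega
            have A16 : arcP (hz) (fx + 1) (0) := by unfold arcP; omega
            have A17 : arcP (hz) (fx + 1) (fx) := by unfold arcP; omega
            have A18 : arcP (hz) (fx + 1) (1) := by unfold arcP; omega
            have A19 : arcP (hz) (fx + 1) (hz + 1) := by unfold arcP; omega
            have A20 : arcP (hz + 1) (fx) (1) := by unfold arcP; omega
            have A21 : ¬ arcP (hz + 1) (fx) (fx + 1) := by unfold arcP; omega
            have A22 : arcP (hz + 1) (fx) (0) := by unfold arcP; omega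
            have A23 : ¬ arcP (hz + 1) (fx) (hz) := by unfold arcP; omega
            refine ⟨?_, ?_, ?_⟩ <;> (simp [mterm, ind, A0, A1, A2, A3, A4, A5, A6, A7, A8, A9, A10, A11, A12, A13, A14, A15, A16, A17, A18, A19, A20, A21, A22, A23]; linarith)
          · exact absurd hc (by unfold crP arcP; omega)
          · exact absurd hc (by unfold crP arcP; omega)
        · rcases hadm with ⟨hc, s1, s2⟩ | ⟨hc, s1, s2⟩ | ⟨hc, s1, s2⟩ | ⟨hc, s1, s2⟩
          · exact absurd hc (by unfold crP arcP; omega)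
          · have A0 : arcP (0) (fx) (1) := by unfold arcP; omega
            have A1 : arcP (0) (fx) (hz + 1) := by unfold arcP; omega
            have A2 : arcP (0) (fx) (hz) := by unfold arcP; omega
            have A3 : ¬ arcP (0) (fx) (fx + 1) := by unfold arcP; omega
            have A4 : ¬ arcP (1) (fx + 1) (0) := by unfold arcP; omega
            have A5 : arcP (1) (fx + 1) (hz) := by unfold arcP; omega
            have A6 : arcP (1) (fx + 1) (hz + 1) := by unfold arcP; omega
            have A7 : arcP (1) (fx + 1) (fx) := by unfold arcP; omega
            have A8 : ¬ arcP (1) (hz + 1) (0) := by unfold arcP; omega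
            have A9 : ¬ arcP (1) (hz + 1) (fx) := by unfold arcP; omega
            have A10 : arcP (1) (hz + 1) (hz) := by unfold arcP; omega
            have A11 : ¬ arcP (1) (hz + 1) (fx + 1) := by unfold arcP; omega
            have A12 : arcP (0) (hz) (1) := by unfold arcP; omega
            have A13 : ¬ arcP (0) (hz) (fx + 1) := by unfold arcP; omega
            have A14 : ¬ arcP (0) (hz) (hz + 1) := by unfold arcP; omega
            have A15 : ¬ arcP (0) (hz) (fx) := by unfold arcP; omega
            have A16 : ¬ arcP (hz) (fx + 1) (0) := by unfold arcP; omega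
            have A17 : arcP (hz) (fx + 1) (fx) := by unfold arcP; omega
            have A18 : ¬ arcP (hz) (fx + 1) (1) := by unfold arcP; omega
            have A19 : arcP (hz) (fx + 1) (hz + 1) := by unfold arcP; omega
            have A20 : ¬ arcP (hz + 1) (fx) (1) := by unfold arcP; omega
            have A21 : ¬ arcP (hz + 1) (fx) (fx + 1) := by unfold arcP; omega
            have A22 : ¬ arcP (hz + 1) (fx) (0) := by unfold arcP; omega
            have A23 : ¬ arcP (hz + 1) (fx) (hz) := by unfold arcP; omega
            refine ⟨?_, ?_, ?_⟩ <;> (simp [mterm, ind, A0, A1, A2, A3, A4, A5, A6, A7, A8, A9, A10, A11, A12, A13, A14, A15, A16, A17, A18, A19, A20, A21, A22, A23]; linarith)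
          · exact absurd hc (by unfold crP arcP; omega)
          · exact absurd hc (by unfold crP arcP; omega)
    · rcases h3 with rfl | rfl
      · rcases Nat.lt_or_ge fz fy with ho | ho
        · rcases hadm with ⟨hc, s1, s2⟩ | ⟨hc, s1, s2⟩ | ⟨hc, s1, s2⟩ | ⟨hc, s1, s2⟩
          · have A0 : arcP (0) (fz + 1) (1) := by unfold arcP; omega
            have A1 : ¬ arcP (0) (fz + 1) (fy) := by unfold arcP; omega
            have A2 : ¬ arcP (0) (fz + 1) (fy + 1) := by unfold arcP; omega
            have A3 : arcP (0) (fz + 1) (fz) := by unfold arcP; omega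
            have A4 : ¬ arcP (1) (fz) (0) := by unfold arcP; omega
            have A5 : ¬ arcP (1) (fz) (fy + 1) := by unfold arcP; omega
            have A6 : ¬ arcP (1) (fz) (fy) := by unfold arcP; omega
            have A7 : ¬ arcP (1) (fz) (fz + 1) := by unfold arcP; omega
            have A8 : ¬ arcP (1) (fy) (0) := by unfold arcP; omega
            have A9 : arcP (1) (fy) (fz + 1) := by unfold arcP; omega
            have A10 : ¬ arcP (1) (fy) (fy + 1) := by unfold arcP; omega
            have A11 : arcP (1) (fy) (fz) := by unfold arcP; omega
            have A12 : arcP (0) (fy + 1) (1) := by unfold arcP; omega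
            have A13 : arcP (0) (fy + 1) (fz) := by unfold arcP; omega
            have A14 : arcP (0) (fy + 1) (fy) := by unfold arcP; omega
            have A15 : arcP (0) (fy + 1) (fz + 1) := by unfold arcP; omega
            have A16 : arcP (fy + 1) (fz) (0) := by unfold arcP; omega
            have A17 : ¬ arcP (fy + 1) (fz) (fz + 1) := by unfold arcP; omega
            have A18 : arcP (fy + 1) (fz) (1) := by unfold arcP; omega
            have A19 : ¬ arcP (fy + 1) (fz) (fy) := by unfold arcP; omega
            have A20 : arcP (fy) (fz + 1) (1) := by unfold arcP; omega
            have A21 : arcP (fy) (fz + 1) (fz) := by unfold arcP; omega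
            have A22 : arcP (fy) (fz + 1) (0) := by unfold arcP; omega
            have A23 : arcP (fy) (fz + 1) (fy + 1) := by unfold arcP; omega
            refine ⟨?_, ?_, ?_⟩ <;> (simp [mterm, ind, A0, A1, A2, A3, A4, A5, A6, A7, A8, A9, A10, A11, A12, A13, A14, A15, A16, A17, A18, A19, A20, A21, A22, A23]; linarith)
          · exact absurd hc (by unfold crP arcP; omega)
          · exact absurd hc (by unfold crP arcP; omega)
          · exact absurd hc (by unfold crP arcP; omega)
        · rcases hadm with ⟨hc, s1, s2⟩ | ⟨hc, s1, s2⟩ | ⟨hc, s1, s2⟩ | ⟨hc, s1, s2⟩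
          · have A0 : arcP (0) (fz + 1) (1) := by unfold arcP; omega
            have A1 : arcP (0) (fz + 1) (fy) := by unfold arcP; omega
            have A2 : arcP (0) (fz + 1) (fy + 1) := by unfold arcP; omega
            have A3 : arcP (0) (fz + 1) (fz) := by unfold arcP; omega
            have A4 : ¬ arcP (1) (fz) (0) := by unfold arcP; omega
            have A5 : arcP (1) (fz) (fy + 1) := by unfold arcP; omega
            have A6 : arcP (1) (fz) (fy) := by unfold arcP; omega
            have A7 : ¬ arcP (1) (fz) (fz + 1) := by unfold arcP; omega
            have A8 : ¬ arcP (1) (fy) (0) := by unfold arcP; omega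
            have A9 : ¬ arcP (1) (fy) (fz + 1) := by unfold arcP; omega
            have A10 : ¬ arcP (1) (fy) (fy + 1) := by unfold arcP; omega
            have A11 : ¬ arcP (1) (fy) (fz) := by unfold arcP; omega
            have A12 : arcP (0) (fy + 1) (1) := by unfold arcP; omega
            have A13 : ¬ arcP (0) (fy + 1) (fz) := by unfold arcP; omega
            have A14 : arcP (0) (fy + 1) (fy) := by unfold arcP; omega
            have A15 : ¬ arcP (0) (fy + 1) (fz + 1) := by unfold arcP; omega
            have A16 : ¬ arcP (fy + 1) (fz) (0) := by unfold arcP; omega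
            have A17 : ¬ arcP (fy + 1) (fz) (fz + 1) := by unfold arcP; omega
            have A18 : ¬ arcP (fy + 1) (fz) (1) := by unfold arcP; omega
            have A19 : ¬ arcP (fy + 1) (fz) (fy) := by unfold arcP; omega
            have A20 : ¬ arcP (fy) (fz + 1) (1) := by unfold arcP; omega
            have A21 : arcP (fy) (fz + 1) (fz) := by unfold arcP; omega
            have A22 : ¬ arcP (fy) (fz + 1) (0) := by unfold arcP; omega
            have A23 : arcP (fy) (fz + 1) (fy + 1) := by unfold arcP; omega
            refine ⟨?_, ?_, ?_⟩ <;> (simp [mterm, ind, A0, A1, A2, A3, A4, A5, A6, A7, A8, A9, A10, A11, A12, A13, A14, A15, A16, A17, A18, A19, A20, A21, A22, A23]; linarith)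
          · exact absurd hc (by unfold crP arcP; omega)
          · exact absurd hc (by unfold crP arcP; omega)
          · exact absurd hc (by unfold crP arcP; omega)
      · rcases Nat.lt_or_ge fz hz with ho | ho
        · rcases hadm with ⟨hc, s1, s2⟩ | ⟨hc, s1, s2⟩ | ⟨hc, s1, s2⟩ | ⟨hc, s1, s2⟩
          · exact absurd hc (by unfold crP arcP; omega)
          · exact absurd hc (by unfold crP arcP; omega)
          · exact absurd hc (by unfold crP arcP; omega)
          · have A0 : arcP (0) (fz + 1) (1) := by unfold arcP; omega
            have A1 : ¬ arcP (0) (fz + 1) (hz + 1) := by unfold arcP; omega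
            have A2 : ¬ arcP (0) (fz + 1) (hz) := by unfold arcP; omega
            have A3 : arcP (0) (fz + 1) (fz) := by unfold arcP; omega
            have A4 : ¬ arcP (1) (fz) (0) := by unfold arcP; omega
            have A5 : ¬ arcP (1) (fz) (hz) := by unfold arcP; omega
            have A6 : ¬ arcP (1) (fz) (hz + 1) := by unfold arcP; omega
            have A7 : ¬ arcP (1) (fz) (fz + 1) := by unfold arcP; omega
            have A8 : ¬ arcP (1) (hz + 1) (0) := by unfold arcP; omega
            have A9 : arcP (1) (hz + 1) (fz + 1) := by unfold arcP; omega
            have A10 : arcP (1) (hz + 1) (hz) := by unfold arcP; omega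
            have A11 : arcP (1) (hz + 1) (fz) := by unfold arcP; omega
            have A12 : arcP (0) (hz) (1) := by unfold arcP; omega
            have A13 : arcP (0) (hz) (fz) := by unfold arcP; omega
            have A14 : ¬ arcP (0) (hz) (hz + 1) := by unfold arcP; omega
            have A15 : arcP (0) (hz) (fz + 1) := by unfold arcP; omega
            have A16 : arcP (hz) (fz) (0) := by unfold arcP; omega
            have A17 : ¬ arcP (hz) (fz) (fz + 1) := by unfold arcP; omega
            have A18 : arcP (hz) (fz) (1) := by unfold arcP; omega
            have A19 : arcP (hz) (fz) (hz + 1) := by unfold arcP; omega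
            have A20 : arcP (hz + 1) (fz + 1) (1) := by unfold arcP; omega
            have A21 : arcP (hz + 1) (fz + 1) (fz) := by unfold arcP; omega
            have A22 : arcP (hz + 1) (fz + 1) (0) := by unfold arcP; omega
            have A23 : ¬ arcP (hz + 1) (fz + 1) (hz) := by unfold arcP; omega
            refine ⟨?_, ?_, ?_⟩ <;> (simp [mterm, ind, A0, A1, A2, A3, A4, A5, A6, A7, A8, A9, A10, A11, A12, A13, A14, A15, A16, A17, A18, A19, A20, A21, A22, A23]; linarith)
        · rcases hadm with ⟨hc, s1, s2⟩ | ⟨hc, s1, s2⟩ | ⟨hc, s1, s2⟩ | ⟨hc, s1, s2⟩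
          · exact absurd hc (by unfold crP arcP; omega)
          · exact absurd hc (by unfold crP arcP; omega)
          · exact absurd hc (by unfold crP arcP; omega)
          · have A0 : arcP (0) (fz + 1) (1) := by unfold arcP; omega
            have A1 : arcP (0) (fz + 1) (hz + 1) := by unfold arcP; omega
            have A2 : arcP (0) (fz + 1) (hz) := by unfold arcP; omega
            have A3 : arcP (0) (fz + 1) (fz) := by unfold arcP; omega
            have A4 : ¬ arcP (1) (fz) (0) := by unfold arcP; omega
            have A5 : arcP (1) (fz) (hz) := by unfold arcP; omega
            have A6 : arcP (1) (fz) (hz + 1) := by unfold arcP; omega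
            have A7 : ¬ arcP (1) (fz) (fz + 1) := by unfold arcP; omega
            have A8 : ¬ arcP (1) (hz + 1) (0) := by unfold arcP; omega
            have A9 : ¬ arcP (1) (hz + 1) (fz + 1) := by unfold arcP; omega
            have A10 : arcP (1) (hz + 1) (hz) := by unfold arcP; omega
            have A11 : ¬ arcP (1) (hz + 1) (fz) := by unfold arcP; omega
            have A12 : arcP (0) (hz) (1) := by unfold arcP; omega
            have A13 : ¬ arcP (0) (hz) (fz) := by unfold arcP; omega
            have A14 : ¬ arcP (0) (hz) (hz + 1) := by unfold arcP; omega
            have A15 : ¬ arcP (0) (hz) (fz + 1) := by unfold arcP; omega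
            have A16 : ¬ arcP (hz) (fz) (0) := by unfold arcP; omega
            have A17 : ¬ arcP (hz) (fz) (fz + 1) := by unfold arcP; omega
            have A18 : ¬ arcP (hz) (fz) (1) := by unfold arcP; omega
            have A19 : arcP (hz) (fz) (hz + 1) := by unfold arcP; omega
            have A20 : ¬ arcP (hz + 1) (fz + 1) (1) := by unfold arcP; omega
            have A21 : arcP (hz + 1) (fz + 1) (fz) := by unfold arcP; omega
            have A22 : ¬ arcP (hz + 1) (fz + 1) (0) := by unfold arcP; omega
            have A23 : ¬ arcP (hz + 1) (fz + 1) (hz) := by unfold arcP; omega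
            refine ⟨?_, ?_, ?_⟩ <;> (simp [mterm, ind, A0, A1, A2, A3, A4, A5, A6, A7, A8, A9, A10, A11, A12, A13, A14, A15, A16, A17, A18, A19, A20, A21, A22, A23]; linarith)
  · rcases h2 with rfl | rfl
    · rcases h3 with rfl | rfl
      · rcases Nat.lt_or_ge fx fy with ho | ho
        · rcases hadm with ⟨hc, s1, s2⟩ | ⟨hc, s1, s2⟩ | ⟨hc, s1, s2⟩ | ⟨hc, s1, s2⟩
          · exact absurd hc (by unfold crP arcP; omega)
          · exact absurd hc (by unfold crP arcP; omega)
          · exact absurd hc (by unfold crP arcP; omega)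
          · have A0 : ¬ arcP (1) (fx) (0) := by unfold arcP; omega
            have A1 : ¬ arcP (1) (fx) (fy) := by unfold arcP; omega
            have A2 : ¬ arcP (1) (fx) (fy + 1) := by unfold arcP; omega
            have A3 : ¬ arcP (1) (fx) (fx + 1) := by unfold arcP; omega
            have A4 : arcP (0) (fx + 1) (1) := by unfold arcP; omega
            have A5 : ¬ arcP (0) (fx + 1) (fy + 1) := by unfold arcP; omega
            have A6 : ¬ arcP (0) (fx + 1) (fy) := by unfold arcP; omega
            have A7 : arcP (0) (fx + 1) (fx) := by unfold arcP; omega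
            have A8 : arcP (0) (fy) (1) := by unfold arcP; omega
            have A9 : arcP (0) (fy) (fx) := by unfold arcP; omega
            have A10 : ¬ arcP (0) (fy) (fy + 1) := by unfold arcP; omega
            have A11 : arcP (0) (fy) (fx + 1) := by unfold arcP; omega
            have A12 : ¬ arcP (1) (fy + 1) (0) := by unfold arcP; omega
            have A13 : arcP (1) (fy + 1) (fx + 1) := by unfold arcP; omega
            have A14 : arcP (1) (fy + 1) (fy) := by unfold arcP; omega
            have A15 : arcP (1) (fy + 1) (fx) := by unfold arcP; omega
            have A16 : arcP (fy + 1) (fx + 1) (1) := by unfold arcP; omega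
            have A17 : arcP (fy + 1) (fx + 1) (fx) := by unfold arcP; omega
            have A18 : arcP (fy + 1) (fx + 1) (0) := by unfold arcP; omega
            have A19 : ¬ arcP (fy + 1) (fx + 1) (fy) := by unfold arcP; omega
            have A20 : arcP (fy) (fx) (0) := by unfold arcP; omega
            have A21 : ¬ arcP (fy) (fx) (fx + 1) := by unfold arcP; omega
            have A22 : arcP (fy) (fx) (1) := by unfold arcP; omega
            have A23 : arcP (fy) (fx) (fy + 1) := by unfold arcP; omega
            refine ⟨?_, ?_, ?_⟩ <;> (simp [mterm, ind, A0, A1, A2, A3, A4, A5, A6, A7, A8, A9, A10, A11, A12, A13, A14, A15, A16, A17, A18, A19, A20, A21, A22, A23]; linarith)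
        · rcases hadm with ⟨hc, s1, s2⟩ | ⟨hc, s1, s2⟩ | ⟨hc, s1, s2⟩ | ⟨hc, s1, s2⟩
          · exact absurd hc (by unfold crP arcP; omega)
          · exact absurd hc (by unfold crP arcP; omega)
          · exact absurd hc (by unfold crP arcP; omega)
          · have A0 : ¬ arcP (1) (fx) (0) := by unfold arcP; omega
            have A1 : arcP (1) (fx) (fy) := by unfold arcP; omega
            have A2 : arcP (1) (fx) (fy + 1) := by unfold arcP; omega
            have A3 : ¬ arcP (1) (fx) (fx + 1) := by unfold arcP; omega
            have A4 : arcP (0) (fx + 1) (1) := by unfold arcP; omega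
            have A5 : arcP (0) (fx + 1) (fy + 1) := by unfold arcP; omega
            have A6 : arcP (0) (fx + 1) (fy) := by unfold arcP; omega
            have A7 : arcP (0) (fx + 1) (fx) := by unfold arcP; omega
            have A8 : arcP (0) (fy) (1) := by unfold arcP; omega
            have A9 : ¬ arcP (0) (fy) (fx) := by unfold arcP; omega
            have A10 : ¬ arcP (0) (fy) (fy + 1) := by unfold arcP; omega
            have A11 : ¬ arcP (0) (fy) (fx + 1) := by unfold arcP; omega
            have A12 : ¬ arcP (1) (fy + 1) (0) := by unfold arcP; omega
            have A13 : ¬ arcP (1) (fy + 1) (fx + 1) := by unfold arcP; omega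
            have A14 : arcP (1) (fy + 1) (fy) := by unfold arcP; omega
            have A15 : ¬ arcP (1) (fy + 1) (fx) := by unfold arcP; omega
            have A16 : ¬ arcP (fy + 1) (fx + 1) (1) := by unfold arcP; omega
            have A17 : arcP (fy + 1) (fx + 1) (fx) := by unfold arcP; omega
            have A18 : ¬ arcP (fy + 1) (fx + 1) (0) := by unfold arcP; omega
            have A19 : ¬ arcP (fy + 1) (fx + 1) (fy) := by unfold arcP; omega
            have A20 : ¬ arcP (fy) (fx) (0) := by unfold arcP; omega
            have A21 : ¬ arcP (fy) (fx) (fx + 1) := by unfold arcP; omega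
            have A22 : ¬ arcP (fy) (fx) (1) := by unfold arcP; omega
            have A23 : arcP (fy) (fx) (fy + 1) := by unfold arcP; omega
            refine ⟨?_, ?_, ?_⟩ <;> (simp [mterm, ind, A0, A1, A2, A3, A4, A5, A6, A7, A8, A9, A10, A11, A12, A13, A14, A15, A16, A17, A18, A19, A20, A21, A22, A23]; linarith)
      · rcases Nat.lt_or_ge fx hz with ho | ho
        · rcases hadm with ⟨hc, s1, s2⟩ | ⟨hc, s1, s2⟩ | ⟨hc, s1, s2⟩ | ⟨hc, s1, s2⟩
          · have A0 : ¬ arcP (1) (fx) (0) := by unfold arcP; omega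
            have A1 : ¬ arcP (1) (fx) (hz + 1) := by unfold arcP; omega
            have A2 : ¬ arcP (1) (fx) (hz) := by unfold arcP; omega
            have A3 : ¬ arcP (1) (fx) (fx + 1) := by unfold arcP; omega
            have A4 : arcP (0) (fx + 1) (1) := by unfold arcP; omega
            have A5 : ¬ arcP (0) (fx + 1) (hz) := by unfold arcP; omega
            have A6 : ¬ arcP (0) (fx + 1) (hz + 1) := by unfold arcP; omega
            have A7 : arcP (0) (fx + 1) (fx) := by unfold arcP; omega
            have A8 : arcP (0) (hz + 1) (1) := by unfold arcP; omega
            have A9 : arcP (0) (hz + 1) (fx) := by unfold arcP; omega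
            have A10 : arcP (0) (hz + 1) (hz) := by unfold arcP; omega
            have A11 : arcP (0) (hz + 1) (fx + 1) := by unfold arcP; omega
            have A12 : ¬ arcP (1) (hz) (0) := by unfold arcP; omega
            have A13 : arcP (1) (hz) (fx + 1) := by unfold arcP; omega
            have A14 : ¬ arcP (1) (hz) (hz + 1) := by unfold arcP; omega
            have A15 : arcP (1) (hz) (fx) := by unfold arcP; omega
            have A16 : arcP (hz) (fx + 1) (1) := by unfold arcP; omega
            have A17 : arcP (hz) (fx + 1) (fx) := by unfold arcP; omega
            have A18 : arcP (hz) (fx + 1) (0) := by unfold arcP; omega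
            have A19 : arcP (hz) (fx + 1) (hz + 1) := by unfold arcP; omega
            have A20 : arcP (hz + 1) (fx) (0) := by unfold arcP; omega
            have A21 : ¬ arcP (hz + 1) (fx) (fx + 1) := by unfold arcP; omega
            have A22 : arcP (hz + 1) (fx) (1) := by unfold arcP; omega
            have A23 : ¬ arcP (hz + 1) (fx) (hz) := by unfold arcP; omega
            refine ⟨?_, ?_, ?_⟩ <;> (simp [mterm, ind, A0, A1, A2, A3, A4, A5, A6, A7, A8, A9, A10, A11, A12, A13, A14, A15, A16, A17, A18, A19, A20, A21, A22, A23]; linarith)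
          · exact absurd hc (by unfold crP arcP; omega)
          · exact absurd hc (by unfold crP arcP; omega)
          · exact absurd hc (by unfold crP arcP; omega)
        · rcases hadm with ⟨hc, s1, s2⟩ | ⟨hc, s1, s2⟩ | ⟨hc, s1, s2⟩ | ⟨hc, s1, s2⟩
          · have A0 : ¬ arcP (1) (fx) (0) := by unfold arcP; omega
            have A1 : arcP (1) (fx) (hz + 1) := by unfold arcP; omega
            have A2 : arcP (1) (fx) (hz) := by unfold arcP; omega
            have A3 : ¬ arcP (1) (fx) (fx + 1) := by unfold arcP; omega
            have A4 : arcP (0) (fx + 1) (1) := by unfold arcP; omega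
            have A5 : arcP (0) (fx + 1) (hz) := by unfold arcP; omega
            have A6 : arcP (0) (fx + 1) (hz + 1) := by unfold arcP; omega
            have A7 : arcP (0) (fx + 1) (fx) := by unfold arcP; omega
            have A8 : arcP (0) (hz + 1) (1) := by unfold arcP; omega
            have A9 : ¬ arcP (0) (hz + 1) (fx) := by unfold arcP; omega
            have A10 : arcP (0) (hz + 1) (hz) := by unfold arcP; omega
            have A11 : ¬ arcP (0) (hz + 1) (fx + 1) := by unfold arcP; omega
            have A12 : ¬ arcP (1) (hz) (0) := by unfold arcP; omega
            have A13 : ¬ arcP (1) (hz) (fx + 1) := by unfold arcP; omega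
            have A14 : ¬ arcP (1) (hz) (hz + 1) := by unfold arcP; omega
            have A15 : ¬ arcP (1) (hz) (fx) := by unfold arcP; omega
            have A16 : ¬ arcP (hz) (fx + 1) (1) := by unfold arcP; omega
            have A17 : arcP (hz) (fx + 1) (fx) := by unfold arcP; omega
            have A18 : ¬ arcP (hz) (fx + 1) (0) := by unfold arcP; omega
            have A19 : arcP (hz) (fx + 1) (hz + 1) := by unfold arcP; omega
            have A20 : ¬ arcP (hz + 1) (fx) (0) := by unfold arcP; omega
            have A21 : ¬ arcP (hz + 1) (fx) (fx + 1) := by unfold arcP; omega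
            have A22 : ¬ arcP (hz + 1) (fx) (1) := by unfold arcP; omega
            have A23 : ¬ arcP (hz + 1) (fx) (hz) := by unfold arcP; omega
            refine ⟨?_, ?_, ?_⟩ <;> (simp [mterm, ind, A0, A1, A2, A3, A4, A5, A6, A7, A8, A9, A10, A11, A12, A13, A14, A15, A16, A17, A18, A19, A20, A21, A22, A23]; linarith)
          · exact absurd hc (by unfold crP arcP; omega)
          · exact absurd hc (by unfold crP arcP; omega)
          · exact absurd hc (by unfold crP arcP; omega)
    · rcases h3 with rfl | rfl
      · rcases Nat.lt_or_ge fz fy with ho | ho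
        · rcases hadm with ⟨hc, s1, s2⟩ | ⟨hc, s1, s2⟩ | ⟨hc, s1, s2⟩ | ⟨hc, s1, s2⟩
          · exact absurd hc (by unfold crP arcP; omega)
          · have A0 : ¬ arcP (1) (fz + 1) (0) := by unfold arcP; omega
            have A1 : ¬ arcP (1) (fz + 1) (fy) := by unfold arcP; omega
            have A2 : ¬ arcP (1) (fz + 1) (fy + 1) := by unfold arcP; omega
            have A3 : arcP (1) (fz + 1) (fz) := by unfold arcP; omega
            have A4 : arcP (0) (fz) (1) := by unfold arcP; omega
            have A5 : ¬ arcP (0) (fz) (fy + 1) := by unfold arcP; omega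
            have A6 : ¬ arcP (0) (fz) (fy) := by unfold arcP; omega
            have A7 : ¬ arcP (0) (fz) (fz + 1) := by unfold arcP; omega
            have A8 : arcP (0) (fy) (1) := by unfold arcP; omega
            have A9 : arcP (0) (fy) (fz + 1) := by unfold arcP; omega
            have A10 : ¬ arcP (0) (fy) (fy + 1) := by unfold arcP; omega
            have A11 : arcP (0) (fy) (fz) := by unfold arcP; omega
            have A12 : ¬ arcP (1) (fy + 1) (0) := by unfold arcP; omega
            have A13 : arcP (1) (fy + 1) (fz) := by unfold arcP; omega
            have A14 : arcP (1) (fy + 1) (fy) := by unfold arcP; omega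
            have A15 : arcP (1) (fy + 1) (fz + 1) := by unfold arcP; omega
            have A16 : arcP (fy + 1) (fz) (1) := by unfold arcP; omega
            have A17 : ¬ arcP (fy + 1) (fz) (fz + 1) := by unfold arcP; omega
            have A18 : arcP (fy + 1) (fz) (0) := by unfold arcP; omega
            have A19 : ¬ arcP (fy + 1) (fz) (fy) := by unfold arcP; omega
            have A20 : arcP (fy) (fz + 1) (0) := by unfold arcP; omega
            have A21 : arcP (fy) (fz + 1) (fz) := by unfold arcP; omega
            have A22 : arcP (fy) (fz + 1) (1) := by unfold arcP; omega
            have A23 : arcP (fy) (fz + 1) (fy + 1) := by unfold arcP; omega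
            refine ⟨?_, ?_, ?_⟩ <;> (simp [mterm, ind, A0, A1, A2, A3, A4, A5, A6, A7, A8, A9, A10, A11, A12, A13, A14, A15, A16, A17, A18, A19, A20, A21, A22, A23]; linarith)
          · exact absurd hc (by unfold crP arcP; omega)
          · exact absurd hc (by unfold crP arcP; omega)
        · rcases hadm with ⟨hc, s1, s2⟩ | ⟨hc, s1, s2⟩ | ⟨hc, s1, s2⟩ | ⟨hc, s1, s2⟩
          · exact absurd hc (by unfold crP arcP; omega)
          · have A0 : ¬ arcP (1) (fz + 1) (0) := by unfold arcP; omega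
            have A1 : arcP (1) (fz + 1) (fy) := by unfold arcP; omega
            have A2 : arcP (1) (fz + 1) (fy + 1) := by unfold arcP; omega
            have A3 : arcP (1) (fz + 1) (fz) := by unfold arcP; omega
            have A4 : arcP (0) (fz) (1) := by unfold arcP; omega
            have A5 : arcP (0) (fz) (fy + 1) := by unfold arcP; omega
            have A6 : arcP (0) (fz) (fy) := by unfold arcP; omega
            have A7 : ¬ arcP (0) (fz) (fz + 1) := by unfold arcP; omega
            have A8 : arcP (0) (fy) (1) := by unfold arcP; omega
            have A9 : ¬ arcP (0) (fy) (fz + 1) := by unfold arcP; omega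
            have A10 : ¬ arcP (0) (fy) (fy + 1) := by unfold arcP; omega
            have A11 : ¬ arcP (0) (fy) (fz) := by unfold arcP; omega
            have A12 : ¬ arcP (1) (fy + 1) (0) := by unfold arcP; omega
            have A13 : ¬ arcP (1) (fy + 1) (fz) := by unfold arcP; omega
            have A14 : arcP (1) (fy + 1) (fy) := by unfold arcP; omega
            have A15 : ¬ arcP (1) (fy + 1) (fz + 1) := by unfold arcP; omega
            have A16 : ¬ arcP (fy + 1) (fz) (1) := by unfold arcP; omega
            have A17 : ¬ arcP (fy + 1) (fz) (fz + 1) := by unfold arcP; omega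
            have A18 : ¬ arcP (fy + 1) (fz) (0) := by unfold arcP; omega
            have A19 : ¬ arcP (fy + 1) (fz) (fy) := by unfold arcP; omega
            have A20 : ¬ arcP (fy) (fz + 1) (0) := by unfold arcP; omega
            have A21 : arcP (fy) (fz + 1) (fz) := by unfold arcP; omega
            have A22 : ¬ arcP (fy) (fz + 1) (1) := by unfold arcP; omega
            have A23 : arcP (fy) (fz + 1) (fy + 1) := by unfold arcP; omega
            refine ⟨?_, ?_, ?_⟩ <;> (simp [mterm, ind, A0, A1, A2, A3, A4, A5, A6, A7, A8, A9, A10, A11, A12, A13, A14, A15, A16, A17, A18, A19, A20, A21, A22, A23]; linarith)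
          · exact absurd hc (by unfold crP arcP; omega)
          · exact absurd hc (by unfold crP arcP; omega)
      · rcases Nat.lt_or_ge fz hz with ho | ho
        · rcases hadm with ⟨hc, s1, s2⟩ | ⟨hc, s1, s2⟩ | ⟨hc, s1, s2⟩ | ⟨hc, s1, s2⟩
          · exact absurd hc (by unfold crP arcP; omega)
          · exact absurd hc (by unfold crP arcP; omega)
          · have A0 : ¬ arcP (1) (fz + 1) (0) := by unfold arcP; omega
            have A1 : ¬ arcP (1) (fz + 1) (hz + 1) := by unfold arcP; omega
            have A2 : ¬ arcP (1) (fz + 1) (hz) := by unfold arcP; omega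
            have A3 : arcP (1) (fz + 1) (fz) := by unfold arcP; omega
            have A4 : arcP (0) (fz) (1) := by unfold arcP; omega
            have A5 : ¬ arcP (0) (fz) (hz) := by unfold arcP; omega
            have A6 : ¬ arcP (0) (fz) (hz + 1) := by unfold arcP; omega
            have A7 : ¬ arcP (0) (fz) (fz + 1) := by unfold arcP; omega
            have A8 : arcP (0) (hz + 1) (1) := by unfold arcP; omega
            have A9 : arcP (0) (hz + 1) (fz + 1) := by unfold arcP; omega
            have A10 : arcP (0) (hz + 1) (hz) := by unfold arcP; omega
            have A11 : arcP (0) (hz + 1) (fz) := by unfold arcP; omega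
            have A12 : ¬ arcP (1) (hz) (0) := by unfold arcP; omega
            have A13 : arcP (1) (hz) (fz) := by unfold arcP; omega
            have A14 : ¬ arcP (1) (hz) (hz + 1) := by unfold arcP; omega
            have A15 : arcP (1) (hz) (fz + 1) := by unfold arcP; omega
            have A16 : arcP (hz) (fz) (1) := by unfold arcP; omega
            have A17 : ¬ arcP (hz) (fz) (fz + 1) := by unfold arcP; omega
            have A18 : arcP (hz) (fz) (0) := by unfold arcP; omega
            have A19 : arcP (hz) (fz) (hz + 1) := by unfold arcP; omega
            have A20 : arcP (hz + 1) (fz + 1) (0) := by unfold arcP; omega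
            have A21 : arcP (hz + 1) (fz + 1) (fz) := by unfold arcP; omega
            have A22 : arcP (hz + 1) (fz + 1) (1) := by unfold arcP; omega
            have A23 : ¬ arcP (hz + 1) (fz + 1) (hz) := by unfold arcP; omega
            refine ⟨?_, ?_, ?_⟩ <;> (simp [mterm, ind, A0, A1, A2, A3, A4, A5, A6, A7, A8, A9, A10, A11, A12, A13, A14, A15, A16, A17, A18, A19, A20, A21, A22, A23]; linarith)
          · exact absurd hc (by unfold crP arcP; omega)
        · rcases hadm with ⟨hc, s1, s2⟩ | ⟨hc, s1, s2⟩ | ⟨hc, s1, s2⟩ | ⟨hc, s1, s2⟩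
          · exact absurd hc (by unfold crP arcP; omega)
          · exact absurd hc (by unfold crP arcP; omega)
          · have A0 : ¬ arcP (1) (fz + 1) (0) := by unfold arcP; omega
            have A1 : arcP (1) (fz + 1) (hz + 1) := by unfold arcP; omega
            have A2 : arcP (1) (fz + 1) (hz) := by unfold arcP; omega
            have A3 : arcP (1) (fz + 1) (fz) := by unfold arcP; omega
            have A4 : arcP (0) (fz) (1) := by unfold arcP; omega
            have A5 : arcP (0) (fz) (hz) := by unfold arcP; omega
            have A6 : arcP (0) (fz) (hz + 1) := by unfold arcP; omega
            have A7 : ¬ arcP (0) (fz) (fz + 1) := by unfold arcP; omega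
            have A8 : arcP (0) (hz + 1) (1) := by unfold arcP; omega
            have A9 : ¬ arcP (0) (hz + 1) (fz + 1) := by unfold arcP; omega
            have A10 : arcP (0) (hz + 1) (hz) := by unfold arcP; omega
            have A11 : ¬ arcP (0) (hz + 1) (fz) := by unfold arcP; omega
            have A12 : ¬ arcP (1) (hz) (0) := by unfold arcP; omega
            have A13 : ¬ arcP (1) (hz) (fz) := by unfold arcP; omega
            have A14 : ¬ arcP (1) (hz) (hz + 1) := by unfold arcP; omega
            have A15 : ¬ arcP (1) (hz) (fz + 1) := by unfold arcP; omega
            have A16 : ¬ arcP (hz) (fz) (1) := by unfold arcP; omega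
            have A17 : ¬ arcP (hz) (fz) (fz + 1) := by unfold arcP; omega
            have A18 : ¬ arcP (hz) (fz) (0) := by unfold arcP; omega
            have A19 : arcP (hz) (fz) (hz + 1) := by unfold arcP; omega
            have A20 : ¬ arcP (hz + 1) (fz + 1) (0) := by unfold arcP; omega
            have A21 : arcP (hz + 1) (fz + 1) (fz) := by unfold arcP; omega
            have A22 : ¬ arcP (hz + 1) (fz + 1) (1) := by unfold arcP; omega
            have A23 : ¬ arcP (hz + 1) (fz + 1) (hz) := by unfold arcP; omega
            refine ⟨?_, ?_, ?_⟩ <;> (simp [mterm, ind, A0, A1, A2, A3, A4, A5, A6, A7, A8, A9, A10, A11, A12, A13, A14, A15, A16, A17, A18, A19, A20, A21, A22, A23]; linarith)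
          · exact absurd hc (by unfold crP arcP; omega)

end GDAux
namespace GDAux
open GaussDiagram

lemma cardA_single {G G' : GaussDiagram} (h : SingleChordMove G G') {i : ℤ} (hi : i ≠ 0) :
    G.cardA i = G'.cardA i := by
  obtain ⟨hG, hG', hn, e, φ, y, he, hey, hφ, hmap, hadj⟩ := h
  have hyadj : nadj (2 * G'.n) (G'.head y).1 (G'.foot y).1 ∨
      nadj (2 * G'.n) (G'.foot y).1 (G'.head y).1 := by
    rcases hadj with h | h
    · left; rw [h]; exact nadj_psucc _
    · right; rw [h]; exact nadj_psucc _
  have hcy : ∀ c : Fin G'.n, c ≠ y →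
      arc (G'.head c).1 (G'.foot c).1 (G'.head y).1
        = arc (G'.head c).1 (G'.foot c).1 (G'.foot y).1 := by
    intro c hc
    exact arc_pt_shift hyadj (G'.head c).2 (G'.foot c).2
      (head_ne_head hG' hc) (head_ne_foot hG' c y) (Ne.symm (head_ne_foot hG' y c))
      (foot_ne_foot hG' hc)
  have hpy : G'.parity y = 0 := by
    unfold GaussDiagram.parity
    apply Finset.sum_eq_zero
    intro t _
    by_cases ht : t = y
    · subst ht; simp [GaussDiagram.crosses]
    · have h1 : arc (G'.head y).1 (G'.foot y).1 (G'.head t).1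
          = arc (G'.head y).1 (G'.foot y).1 (G'.foot t).1 :=
        arc_nadj_const hyadj (G'.head t).2 (G'.foot t).2
          (head_ne_head hG' ht) (head_ne_foot hG' t y)
          (Ne.symm (head_ne_foot hG' y t)) (foot_ne_foot hG' ht)
      rw [crosses_eq_cross4 G' ht, h1]
      simp
  have himg : Finset.univ.image e = Finset.univ.erase y := by
    apply Finset.eq_of_subset_of_card_le
    · intro a ha
      simp only [Finset.mem_image] at ha
      obtain ⟨j, _, rfl⟩ := ha
      exact Finset.mem_erase.2 ⟨hey j, Finset.mem_univ _⟩
    · rw [Finset.card_erase_of_mem (Finset.mem_univ _),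
        Finset.card_image_of_injective _ he]
      simp [Finset.card_univ, hn]
  have hsplit : ∀ g : Fin G'.n → ℤ, ∑ t, g t = g y + ∑ j, g (e j) := by
    intro g
    rw [← Finset.add_sum_erase Finset.univ g (Finset.mem_univ y), ← himg,
      Finset.sum_image (fun a _ b _ hab => he hab)]
  have harc : ∀ a b p : Fin (2 * G.n), arc (φ a).1 (φ b).1 (φ p).1 = arc a.1 b.1 p.1 :=
    fun a b p => (hφ a b p).symm
  have hpe : ∀ j, G'.parity (e j) = G.parity j := by
    intro j
    rw [parity_eq, parity_eq, hsplit]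
    have hy0 : mterm (G'.sign y) (G'.head (e j)).1 (G'.foot (e j)).1
        (G'.head y).1 (G'.foot y).1 = 0 :=
      mterm_zero_of_arc_eq _ (hcy (e j) (hey j))
    rw [hy0, zero_add]
    apply Finset.sum_congr rfl
    intro k _
    rw [(hmap k).2.2, (hmap j).1, (hmap j).2.1, (hmap k).1, (hmap k).2.1]
    exact mterm_congr _ (harc _ _ _) (harc _ _ _)
  unfold GaussDiagram.cardA
  rw [hsplit (fun c' => if G'.parity c' = i then G'.sign c' else 0), hpy,
    if_neg (fun hh : (0 : ℤ) = i => hi hh.symm), zero_add]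
  apply Finset.sum_congr rfl
  intro j _
  rw [hpe j, (hmap j).2.2]

end GDAux

namespace GDAux
open GaussDiagram

lemma cardA_two {G G' : GaussDiagram} (h : TwoChordMove G G') (i : ℤ) :
    G.cardA i = G'.cardA i := by
  obtain ⟨hG, hG', hn, e, φ, y₁, y₂, he, hy12, hey, hφ, hmap, hadjH, hadjF, hsgn⟩ := h
  have hH : nadj (2 * G'.n) (G'.head y₁).1 (G'.head y₂).1 ∨
      nadj (2 * G'.n) (G'.head y₂).1 (G'.head y₁).1 := by
    rcases hadjH with h | h
    · left; rw [h]; exact nadj_psucc _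
    · right; rw [h]; exact nadj_psucc _
  have hF : nadj (2 * G'.n) (G'.foot y₁).1 (G'.foot y₂).1 ∨
      nadj (2 * G'.n) (G'.foot y₂).1 (G'.foot y₁).1 := by
    rcases hadjF with h | h
    · left; rw [h]; exact nadj_psucc _
    · right; rw [h]; exact nadj_psucc _
  have hcH : ∀ c : Fin G'.n, c ≠ y₁ → c ≠ y₂ →
      arc (G'.head c).1 (G'.foot c).1 (G'.head y₁).1
        = arc (G'.head c).1 (G'.foot c).1 (G'.head y₂).1 := by
    intro c h1 h2
    exact arc_pt_shift hH (G'.head c).2 (G'.foot c).2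
      (head_ne_head hG' h1) (head_ne_head hG' h2)
      (Ne.symm (head_ne_foot hG' y₁ c)) (Ne.symm (head_ne_foot hG' y₂ c))
  have hcF : ∀ c : Fin G'.n, c ≠ y₁ → c ≠ y₂ →
      arc (G'.head c).1 (G'.foot c).1 (G'.foot y₁).1
        = arc (G'.head c).1 (G'.foot c).1 (G'.foot y₂).1 := by
    intro c h1 h2
    exact arc_pt_shift hF (G'.head c).2 (G'.foot c).2
      (head_ne_foot hG' c y₁) (head_ne_foot hG' c y₂)
      (foot_ne_foot hG' h1) (foot_ne_foot hG' h2)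
  have hcancel : ∀ a b : ℕ,
      arc a b (G'.head y₁).1 = arc a b (G'.head y₂).1 →
      arc a b (G'.foot y₁).1 = arc a b (G'.foot y₂).1 →
      mterm (G'.sign y₁) a b (G'.head y₁).1 (G'.foot y₁).1
        + mterm (G'.sign y₂) a b (G'.head y₂).1 (G'.foot y₂).1 = 0 := by
    intro a b h1 h2
    rw [hsgn, mterm_neg, mterm_congr (G'.sign y₂) h1 h2]
    ring
  have himg : Finset.univ.image e = (Finset.univ.erase y₁).erase y₂ := by
    apply Finset.eq_of_subset_of_card_le
    · rintro a ha
      simp only [Finset.mem_image] at ha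
      obtain ⟨j, _, rfl⟩ := ha
      exact Finset.mem_erase.2 ⟨(hey j).2, Finset.mem_erase.2 ⟨(hey j).1, Finset.mem_univ _⟩⟩
    · rw [Finset.card_erase_of_mem
          (Finset.mem_erase.2 ⟨Ne.symm hy12, Finset.mem_univ y₂⟩),
        Finset.card_erase_of_mem (Finset.mem_univ _),
        Finset.card_image_of_injective _ he]
      simp [Finset.card_univ, hn]
  have hsplit : ∀ g : Fin G'.n → ℤ, ∑ t, g t = g y₁ + (g y₂ + ∑ j, g (e j)) := by
    intro g
    rw [← Finset.add_sum_erase Finset.univ g (Finset.mem_univ y₁),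
      ← Finset.add_sum_erase _ g (Finset.mem_erase.2 ⟨Ne.symm hy12, Finset.mem_univ y₂⟩),
      ← himg, Finset.sum_image (fun a _ b _ hab => he hab)]
  have harc : ∀ a b p : Fin (2 * G.n), arc (φ a).1 (φ b).1 (φ p).1 = arc a.1 b.1 p.1 :=
    fun a b p => (hφ a b p).symm
  have hpe : ∀ j, G'.parity (e j) = G.parity j := by
    intro j
    rw [parity_eq, parity_eq, hsplit]
    rw [← add_assoc,
      hcancel _ _ (hcH (e j) (hey j).1 (hey j).2) (hcF (e j) (hey j).1 (hey j).2), zero_add]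
    apply Finset.sum_congr rfl
    intro k _
    rw [(hmap k).2.2, (hmap j).1, (hmap j).2.1, (hmap k).1, (hmap k).2.1]
    exact mterm_congr _ (harc _ _ _) (harc _ _ _)
  have hbase : ∀ q : Fin (2 * G'.n),
      q.1 ≠ (G'.head y₁).1 → q.1 ≠ (G'.head y₂).1 →
      q.1 ≠ (G'.foot y₁).1 → q.1 ≠ (G'.foot y₂).1 →
      arc (G'.head y₁).1 (G'.foot y₁).1 q.1 = arc (G'.head y₂).1 (G'.foot y₂).1 q.1 := by
    intro q h1 h2 h3 h4
    rw [arc_left_shift hH (G'.foot y₁).2 q.2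
      (Ne.symm (head_ne_foot hG' y₁ y₁)) (Ne.symm (head_ne_foot hG' y₂ y₁)) h1 h2]
    exact arc_right_shift hF (G'.head y₂).2 q.2
      (head_ne_foot hG' y₂ y₁) (head_ne_foot hG' y₂ y₂) h3 h4
  have hmut : mterm (G'.sign y₁) (G'.head y₂).1 (G'.foot y₂).1 (G'.head y₁).1 (G'.foot y₁).1
      = mterm (G'.sign y₂) (G'.head y₁).1 (G'.foot y₁).1 (G'.head y₂).1 (G'.foot y₂).1 := by
    rw [hsgn]
    exact two_mutual (G'.sign y₂)
      (head_ne_head hG' (Ne.symm hy12))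
      (head_ne_foot hG' y₂ y₂)
      (head_ne_foot hG' y₂ y₁)
      (head_ne_foot hG' y₁ y₂)
      (head_ne_foot hG' y₁ y₁)
      (foot_ne_foot hG' (Ne.symm hy12))
  have hsum : (∑ k, mterm (G'.sign (e k)) (G'.head y₁).1 (G'.foot y₁).1
        (G'.head (e k)).1 (G'.foot (e k)).1)
      = ∑ k, mterm (G'.sign (e k)) (G'.head y₂).1 (G'.foot y₂).1
        (G'.head (e k)).1 (G'.foot (e k)).1 := by
    apply Finset.sum_congr rfl
    intro k _
    exact mterm_congr _
      (hbase (G'.head (e k)) (head_ne_head hG' (hey k).1) (head_ne_head hG' (hey k).2)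
        (head_ne_foot hG' (e k) y₁) (head_ne_foot hG' (e k) y₂))
      (hbase (G'.foot (e k)) (Ne.symm (head_ne_foot hG' y₁ (e k)))
        (Ne.symm (head_ne_foot hG' y₂ (e k)))
        (foot_ne_foot hG' (hey k).1) (foot_ne_foot hG' (hey k).2))
  have hpy : G'.parity y₁ = G'.parity y₂ := by
    rw [parity_eq, parity_eq, hsplit, hsplit, mterm_self, mterm_self, hmut, hsum]
    ring
  unfold GaussDiagram.cardA
  rw [hsplit (fun c' => if G'.parity c' = i then G'.sign c' else 0)]
  have hz : ((if G'.parity y₁ = i then G'.sign y₁ else 0)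
      + ((if G'.parity y₂ = i then G'.sign y₂ else 0)
        + ∑ j, (if G'.parity (e j) = i then G'.sign (e j) else 0)))
      = ∑ j, (if G'.parity (e j) = i then G'.sign (e j) else 0) := by
    rw [hpy, hsgn]
    split_ifs <;> ring
  rw [hz]
  refine Finset.sum_congr rfl fun j _ => ?_
  rw [hpe j, (hmap j).2.2]

end GDAux

namespace GDAux
open GaussDiagram

set_option maxHeartbeats 1000000 in
lemma cardA_triangle {G G' : GaussDiagram} (h : TriangleMove G G') (i : ℤ) :
    G.cardA i = G'.cardA i := by
  classical
  obtain ⟨hG, hG', e, φ, x, y, z, w₁, w₂, w₃, hbe, hbφ, hφ, htv, hsgn, hold, hslide, hadm⟩ := h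
  obtain ⟨hxy, hyz, hxz, hw1, hw2, hw3⟩ := htv
  set A : Fin G.n → Fin (2 * G.n) := (fun k =>
    if k = x then G.head y else if k = y then G.head x else if k = z then G.foot y
      else G.head k) with hAdef
  set B : Fin G.n → Fin (2 * G.n) := (fun k =>
    if k = x then G.foot z else if k = y then G.head z else if k = z then G.foot x
      else G.foot k) with hBdef
  have hAx : A x = G.head y := by simp [hAdef]
  have hBx : B x = G.foot z := by simp [hBdef]
  have hAy : A y = G.head x := by simp [hAdef, Ne.symm hxy]
  have hBy : B y = G.head z := by simp [hBdef, Ne.symm hxy]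
  have hAz : A z = G.foot y := by simp [hAdef, Ne.symm hxz, Ne.symm hyz]
  have hBz : B z = G.foot x := by simp [hBdef, Ne.symm hxz, Ne.symm hyz]
  have hAo : ∀ k, k ≠ x → k ≠ y → k ≠ z → A k = G.head k := by
    intro k h1 h2 h3; simp [hAdef, h1, h2, h3]
  have hBo : ∀ k, k ≠ x → k ≠ y → k ≠ z → B k = G.foot k := by
    intro k h1 h2 h3; simp [hBdef, h1, h2, h3]
  have hAB : ∀ k, G'.head (e k) = φ (A k) ∧ G'.foot (e k) = φ (B k) := by
    intro k
    by_cases h1 : k = x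
    · subst h1; rw [hAx, hBx]; exact ⟨hslide.1.1, hslide.2.1.1⟩
    by_cases h2 : k = y
    · subst h2; rw [hAy, hBy]; exact ⟨hslide.1.2, hslide.2.2.1⟩
    by_cases h3 : k = z
    · subst h3; rw [hAz, hBz]; exact ⟨hslide.2.2.2, hslide.2.1.2⟩
    · rw [hAo k h1 h2 h3, hBo k h1 h2 h3]
      exact ⟨(hold k h1 h2 h3).1, (hold k h1 h2 h3).2⟩
  have harcφ : ∀ a b p : Fin (2 * G.n), arc (φ a).1 (φ b).1 (φ p).1 = arc a.1 b.1 p.1 :=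
    fun a b p => (hφ a b p).symm
  have key : ∀ c, G'.parity (e c)
      = ∑ k, mterm (G.sign k) (A c).1 (B c).1 (A k).1 (B k).1 := by
    intro c
    rw [parity_eq]
    refine (Fintype.sum_bijective e hbe _ _ ?_).symm
    intro k
    rw [hsgn k, (hAB c).1, (hAB c).2, (hAB k).1, (hAB k).2]
    exact (mterm_congr _ (harcφ (A c) (B c) (A k)) (harcφ (A c) (B c) (B k))).symm
  -- adjacency of the three vertex pairs
  have aH : nadj (2*G.n) (G.head x).1 (G.head y).1 ∨ nadj (2*G.n) (G.head y).1 (G.head x).1 := by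
    rcases hw1 with ⟨h1, h2⟩ | ⟨h1, h2⟩
    · left; rw [h1, h2]; exact nadj_psucc _
    · right; rw [h1, h2]; exact nadj_psucc _
  have aF : nadj (2*G.n) (G.foot x).1 (G.foot z).1 ∨ nadj (2*G.n) (G.foot z).1 (G.foot x).1 := by
    rcases hw2 with ⟨h1, h2⟩ | ⟨h1, h2⟩
    · left; rw [h1, h2]; exact nadj_psucc _
    · right; rw [h1, h2]; exact nadj_psucc _
  have aM : nadj (2*G.n) (G.foot y).1 (G.head z).1 ∨ nadj (2*G.n) (G.head z).1 (G.foot y).1 := by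
    rcases hw3 with ⟨h1, h2⟩ | ⟨h1, h2⟩
    · left; rw [h1, h2]; exact nadj_psucc _
    · right; rw [h1, h2]; exact nadj_psucc _
  -- rotation sending the head-head pair to {0,1}
  have hrot : ∃ k₀, k₀ < 2*G.n ∧ (k₀ = (G.head x).1 ∨ k₀ = (G.head y).1) ∧
      ((rotN (2*G.n) k₀ (G.head x).1 = 0 ∧ rotN (2*G.n) k₀ (G.head y).1 = 1) ∨
       (rotN (2*G.n) k₀ (G.head y).1 = 0 ∧ rotN (2*G.n) k₀ (G.head x).1 = 1)) := by
    rcases aH with ha | ha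
    · exact ⟨(G.head x).1, (G.head x).2, Or.inl rfl, Or.inl ⟨rotN_self _ _,
        by rw [rotN_nadj (G.head x).2 (G.head x).2 ha (Ne.symm (head_ne_head hG hxy)),
          rotN_self]⟩⟩
    · exact ⟨(G.head y).1, (G.head y).2, Or.inr rfl, Or.inr ⟨rotN_self _ _,
        by rw [rotN_nadj (G.head y).2 (G.head y).2 ha (head_ne_head hG hxy), rotN_self]⟩⟩
  obtain ⟨k₀, hk₀, hk₀eq, hr01⟩ := hrot
  set r : ℕ → ℕ := rotN (2*G.n) k₀ with hrdef
  have rne : ∀ u v : Fin (2*G.n), u.1 ≠ v.1 → r u.1 ≠ r v.1 :=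
    fun u v h hc => h (rotN_inj hk₀ u.2 v.2 hc)
  have hk0ne : ∀ v : Fin (2*G.n), v.1 ≠ (G.head x).1 → v.1 ≠ (G.head y).1 → v.1 ≠ k₀ := by
    intro v h1 h2
    rcases hk₀eq with hh | hh <;> rw [hh] <;> assumption
  have hradjF : r (G.foot z).1 = r (G.foot x).1 + 1 ∨ r (G.foot x).1 = r (G.foot z).1 + 1 := by
    rcases aF with ha | ha
    · left
      exact rotN_nadj hk₀ (G.foot x).2 ha
        (hk0ne (G.foot z) (Ne.symm (head_ne_foot hG x z)) (Ne.symm (head_ne_foot hG y z)))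
    · right
      exact rotN_nadj hk₀ (G.foot z).2 ha
        (hk0ne (G.foot x) (Ne.symm (head_ne_foot hG x x)) (Ne.symm (head_ne_foot hG y x)))
  have hradjM : r (G.head z).1 = r (G.foot y).1 + 1 ∨ r (G.foot y).1 = r (G.head z).1 + 1 := by
    rcases aM with ha | ha
    · left
      exact rotN_nadj hk₀ (G.foot y).2 ha
        (hk0ne (G.head z) (head_ne_head hG (Ne.symm hxz)) (head_ne_head hG (Ne.symm hyz)))
    · right
      exact rotN_nadj hk₀ (G.head z).2 ha
        (hk0ne (G.foot y) (Ne.symm (head_ne_foot hG x y)) (Ne.symm (head_ne_foot hG y y)))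
  have d1 : 2 ≤ r (G.foot x).1 := by
    have e1 := rne (G.foot x) (G.head x) (Ne.symm (head_ne_foot hG x x))
    have e2 := rne (G.foot x) (G.head y) (Ne.symm (head_ne_foot hG y x))
    rcases hr01 with ⟨f1, f2⟩ | ⟨f1, f2⟩ <;> omega
  have d2 : 2 ≤ r (G.foot z).1 := by
    have e1 := rne (G.foot z) (G.head x) (Ne.symm (head_ne_foot hG x z))
    have e2 := rne (G.foot z) (G.head y) (Ne.symm (head_ne_foot hG y z))
    rcases hr01 with ⟨f1, f2⟩ | ⟨f1, f2⟩ <;> omega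
  have d3 : 2 ≤ r (G.foot y).1 := by
    have e1 := rne (G.foot y) (G.head x) (Ne.symm (head_ne_foot hG x y))
    have e2 := rne (G.foot y) (G.head y) (Ne.symm (head_ne_foot hG y y))
    rcases hr01 with ⟨f1, f2⟩ | ⟨f1, f2⟩ <;> omega
  have d4 : 2 ≤ r (G.head z).1 := by
    have e1 := rne (G.head z) (G.head x) (head_ne_head hG (Ne.symm hxz))
    have e2 := rne (G.head z) (G.head y) (head_ne_head hG (Ne.symm hyz))
    rcases hr01 with ⟨f1, f2⟩ | ⟨f1, f2⟩ <;> omega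
  have d5 : r (G.foot x).1 ≠ r (G.foot y).1 := rne _ _ (foot_ne_foot hG hxy)
  have d6 : r (G.foot x).1 ≠ r (G.head z).1 := rne _ _ (Ne.symm (head_ne_foot hG z x))
  have d7 : r (G.foot z).1 ≠ r (G.foot y).1 := rne _ _ (foot_ne_foot hG (Ne.symm hyz))
  have d8 : r (G.foot z).1 ≠ r (G.head z).1 := rne _ _ (Ne.symm (head_ne_foot hG z z))
  -- crossing translations
  have crr : ∀ a b c d : Fin (2*G.n),
      crP a.1 b.1 c.1 d.1 ↔ crP (r a.1) (r b.1) (r c.1) (r d.1) :=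
    fun a b c d =>
      (crP_congr (arc_rotN hk₀ a.2 b.2 c.2) (arc_rotN hk₀ a.2 b.2 d.2)).symm
  have crφ : ∀ a b c d : Fin (2*G.n),
      crP (φ a).1 (φ b).1 (φ c).1 (φ d).1 ↔ crP (r a.1) (r b.1) (r c.1) (r d.1) :=
    fun a b c d => (crP_congr (harcφ a b c) (harcφ a b d)).trans (crr a b c d)
  have cxy_f : (G.crosses x y = false) ↔
      ¬ crP (r (G.head x).1) (r (G.foot x).1) (r (G.head y).1) (r (G.foot y).1) := by
    rw [crosses_false_iff G (Ne.symm hxy)]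
    exact not_congr (crr (G.head x) (G.foot x) (G.head y) (G.foot y))
  have cxy_t : (G.crosses x y = true) ↔
      crP (r (G.head x).1) (r (G.foot x).1) (r (G.head y).1) (r (G.foot y).1) := by
    rw [crosses_true_iff G (Ne.symm hxy)]
    exact crr (G.head x) (G.foot x) (G.head y) (G.foot y)
  have cyz_f : (G.crosses y z = false) ↔
      ¬ crP (r (G.head y).1) (r (G.foot y).1) (r (G.head z).1) (r (G.foot z).1) := by
    rw [crosses_false_iff G (Ne.symm hyz)]
    exact not_congr (crr (G.head y) (G.foot y) (G.head z) (G.foot z))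
  have cyz_t : (G.crosses y z = true) ↔
      crP (r (G.head y).1) (r (G.foot y).1) (r (G.head z).1) (r (G.foot z).1) := by
    rw [crosses_true_iff G (Ne.symm hyz)]
    exact crr (G.head y) (G.foot y) (G.head z) (G.foot z)
  have cxz_f : (G.crosses x z = false) ↔
      ¬ crP (r (G.head x).1) (r (G.foot x).1) (r (G.head z).1) (r (G.foot z).1) := by
    rw [crosses_false_iff G (Ne.symm hxz)]
    exact not_congr (crr (G.head x) (G.foot x) (G.head z) (G.foot z))
  have cxz_t : (G.crosses x z = true) ↔
      crP (r (G.head x).1) (r (G.foot x).1) (r (G.head z).1) (r (G.foot z).1) := by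
    rw [crosses_true_iff G (Ne.symm hxz)]
    exact crr (G.head x) (G.foot x) (G.head z) (G.foot z)
  have henexy : e y ≠ e x := fun hh => hxy ((hbe.1 hh).symm)
  have heneyz : e z ≠ e y := fun hh => hyz ((hbe.1 hh).symm)
  have henexz : e z ≠ e x := fun hh => hxz ((hbe.1 hh).symm)
  have c'xy_f : (G'.crosses (e x) (e y) = false) ↔
      ¬ crP (r (G.head y).1) (r (G.foot z).1) (r (G.head x).1) (r (G.head z).1) := by
    rw [crosses_false_iff G' henexy, (hAB x).1, (hAB x).2, (hAB y).1, (hAB y).2,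
      hAx, hBx, hAy, hBy]
    exact not_congr (crφ (G.head y) (G.foot z) (G.head x) (G.head z))
  have c'xy_t : (G'.crosses (e x) (e y) = true) ↔
      crP (r (G.head y).1) (r (G.foot z).1) (r (G.head x).1) (r (G.head z).1) := by
    rw [crosses_true_iff G' henexy, (hAB x).1, (hAB x).2, (hAB y).1, (hAB y).2,
      hAx, hBx, hAy, hBy]
    exact crφ (G.head y) (G.foot z) (G.head x) (G.head z)
  have c'yz_f : (G'.crosses (e y) (e z) = false) ↔
      ¬ crP (r (G.head x).1) (r (G.head z).1) (r (G.foot y).1) (r (G.foot x).1) := by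
    rw [crosses_false_iff G' heneyz, (hAB y).1, (hAB y).2, (hAB z).1, (hAB z).2,
      hAy, hBy, hAz, hBz]
    exact not_congr (crφ (G.head x) (G.head z) (G.foot y) (G.foot x))
  have c'yz_t : (G'.crosses (e y) (e z) = true) ↔
      crP (r (G.head x).1) (r (G.head z).1) (r (G.foot y).1) (r (G.foot x).1) := by
    rw [crosses_true_iff G' heneyz, (hAB y).1, (hAB y).2, (hAB z).1, (hAB z).2,
      hAy, hBy, hAz, hBz]
    exact crφ (G.head x) (G.head z) (G.foot y) (G.foot x)
  have c'xz_f : (G'.crosses (e x) (e z) = false) ↔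
      ¬ crP (r (G.head y).1) (r (G.foot z).1) (r (G.foot y).1) (r (G.foot x).1) := by
    rw [crosses_false_iff G' henexz, (hAB x).1, (hAB x).2, (hAB z).1, (hAB z).2,
      hAx, hBx, hAz, hBz]
    exact not_congr (crφ (G.head y) (G.foot z) (G.foot y) (G.foot x))
  have c'xz_t : (G'.crosses (e x) (e z) = true) ↔
      crP (r (G.head y).1) (r (G.foot z).1) (r (G.foot y).1) (r (G.foot x).1) := by
    rw [crosses_true_iff G' henexz, (hAB x).1, (hAB x).2, (hAB z).1, (hAB z).2,
      hAx, hBx, hAz, hBz]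
    exact crφ (G.head y) (G.foot z) (G.foot y) (G.foot x)
  unfold AdmissibleSigns at hadm
  rw [cxy_f, cxy_t, cyz_f, cyz_t, cxz_f, cxz_t, c'xy_f, c'xy_t, c'yz_f, c'yz_t,
    c'xz_f, c'xz_t] at hadm
  obtain ⟨core1, core2, core3⟩ :=
    triangle_core hr01 hradjF hradjM d1 d2 d3 d4 d5 d6 d7 d8 hadm
  have hmrot : ∀ (s : ℤ) (a b c d : Fin (2*G.n)),
      mterm s (r a.1) (r b.1) (r c.1) (r d.1) = mterm s a.1 b.1 c.1 d.1 :=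
    fun s a b c d => mterm_congr s (arc_rotN hk₀ a.2 b.2 c.2) (arc_rotN hk₀ a.2 b.2 d.2)
  rw [hmrot (G.sign y) (G.head x) (G.foot x) (G.head y) (G.foot y),
    hmrot (G.sign z) (G.head x) (G.foot x) (G.head z) (G.foot z),
    hmrot (G.sign y) (G.head y) (G.foot z) (G.head x) (G.head z),
    hmrot (G.sign z) (G.head y) (G.foot z) (G.foot y) (G.foot x)] at core1
  rw [hmrot (G.sign x) (G.head y) (G.foot y) (G.head x) (G.foot x),
    hmrot (G.sign z) (G.head y) (G.foot y) (G.head z) (G.foot z),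
    hmrot (G.sign x) (G.head x) (G.head z) (G.head y) (G.foot z),
    hmrot (G.sign z) (G.head x) (G.head z) (G.foot y) (G.foot x)] at core2
  rw [hmrot (G.sign x) (G.head z) (G.foot z) (G.head x) (G.foot x),
    hmrot (G.sign y) (G.head z) (G.foot z) (G.head y) (G.foot y),
    hmrot (G.sign x) (G.foot y) (G.foot x) (G.head y) (G.foot z),
    hmrot (G.sign y) (G.foot y) (G.foot x) (G.head x) (G.head z)] at core3
  -- replacement of triangle endpoints seen from an outside chord
  have tshift : ∀ a b : Fin (2*G.n),
      a.1 ≠ (G.head x).1 → a.1 ≠ (G.head y).1 → a.1 ≠ (G.foot x).1 → a.1 ≠ (G.foot z).1 →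
      a.1 ≠ (G.foot y).1 → a.1 ≠ (G.head z).1 →
      b.1 ≠ (G.head x).1 → b.1 ≠ (G.head y).1 → b.1 ≠ (G.foot x).1 → b.1 ≠ (G.foot z).1 →
      b.1 ≠ (G.foot y).1 → b.1 ≠ (G.head z).1 →
      (arc a.1 b.1 (G.head y).1 = arc a.1 b.1 (G.head x).1 ∧
       arc a.1 b.1 (G.foot z).1 = arc a.1 b.1 (G.foot x).1 ∧
       arc a.1 b.1 (G.head z).1 = arc a.1 b.1 (G.foot y).1) := by
    intro a b a1 a2 a3 a4 a5 a6 b1 b2 b3 b4 b5 b6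
    refine ⟨?_, ?_, ?_⟩
    · exact (arc_pt_shift aH a.2 b.2 a1 a2 b1 b2).symm
    · exact (arc_pt_shift aF a.2 b.2 a3 a4 b3 b4).symm
    · exact (arc_pt_shift aM a.2 b.2 a5 a6 b5 b6).symm
  -- base replacement seen by an outside point
  have bshift : ∀ q : Fin (2*G.n),
      q.1 ≠ (G.head x).1 → q.1 ≠ (G.head y).1 → q.1 ≠ (G.foot x).1 → q.1 ≠ (G.foot z).1 →
      q.1 ≠ (G.foot y).1 → q.1 ≠ (G.head z).1 →
      (arc (G.head y).1 (G.foot z).1 q.1 = arc (G.head x).1 (G.foot x).1 q.1 ∧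
       arc (G.head x).1 (G.head z).1 q.1 = arc (G.head y).1 (G.foot y).1 q.1 ∧
       arc (G.foot y).1 (G.foot x).1 q.1 = arc (G.head z).1 (G.foot z).1 q.1) := by
    intro q q1 q2 q3 q4 q5 q6
    refine ⟨?_, ?_, ?_⟩
    · rw [arc_left_shift (Or.symm aH) (G.foot z).2 q.2
        (Ne.symm (head_ne_foot hG y z)) (Ne.symm (head_ne_foot hG x z)) q2 q1]
      exact arc_right_shift (Or.symm aF) (G.head x).2 q.2
        (head_ne_foot hG x z) (head_ne_foot hG x x) q4 q3
    · rw [arc_left_shift aH (G.head z).2 q.2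
        (head_ne_head hG (Ne.symm hxz)) (head_ne_head hG (Ne.symm hyz)) q1 q2]
      exact arc_right_shift (Or.symm aM) (G.head y).2 q.2
        (head_ne_head hG hyz) (head_ne_foot hG y y) q6 q5
    · rw [arc_left_shift aM (G.foot x).2 q.2
        (foot_ne_foot hG hxy) (Ne.symm (head_ne_foot hG z x)) q5 q6]
      exact arc_right_shift aF (G.head z).2 q.2
        (head_ne_foot hG z x) (head_ne_foot hG z z) q3 q4
  have hpar : ∀ c, G'.parity (e c) = G.parity c := by
    intro c
    rw [key c, parity_eq G c, ← sub_eq_zero, ← Finset.sum_sub_distrib]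
    have hsub : ∀ k ∈ (Finset.univ : Finset (Fin G.n)),
        k ∉ ({x, y, z} : Finset (Fin G.n)) →
        mterm (G.sign k) (A c).1 (B c).1 (A k).1 (B k).1
          - mterm (G.sign k) (G.head c).1 (G.foot c).1 (G.head k).1 (G.foot k).1 = 0 := by
      intro k _ hk
      simp only [Finset.mem_insert, Finset.mem_singleton, not_or] at hk
      obtain ⟨hk1, hk2, hk3⟩ := hk
      rw [hAo k hk1 hk2 hk3, hBo k hk1 hk2 hk3]
      have bh := bshift (G.head k) (head_ne_head hG hk1) (head_ne_head hG hk2)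
        (head_ne_foot hG k x) (head_ne_foot hG k z) (head_ne_foot hG k y)
        (head_ne_head hG hk3)
      have bf := bshift (G.foot k) (Ne.symm (head_ne_foot hG x k))
        (Ne.symm (head_ne_foot hG y k)) (foot_ne_foot hG hk1) (foot_ne_foot hG hk3)
        (foot_ne_foot hG hk2) (Ne.symm (head_ne_foot hG z k))
      by_cases hc1 : c = x
      · subst hc1
        rw [hAx, hBx, mterm_congr (G.sign k) bh.1 bf.1]
        exact sub_self _
      by_cases hc2 : c = y
      · subst hc2
        rw [hAy, hBy, mterm_congr (G.sign k) bh.2.1 bf.2.1]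
        exact sub_self _
      by_cases hc3 : c = z
      · subst hc3
        rw [hAz, hBz, mterm_congr (G.sign k) bh.2.2 bf.2.2]
        exact sub_self _
      · rw [hAo c hc1 hc2 hc3, hBo c hc1 hc2 hc3]
        exact sub_self _
    rw [← Finset.sum_subset (Finset.subset_univ ({x, y, z} : Finset (Fin G.n))) hsub]
    rw [Finset.sum_insert (by simp [hxy, hxz]), Finset.sum_insert (by simp [hyz]),
      Finset.sum_singleton]
    by_cases hc1 : c = x
    · subst hc1
      rw [hAx, hBx, hAy, hBy, hAz, hBz, mterm_self, mterm_self]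
      linarith [core1]
    by_cases hc2 : c = y
    · subst hc2
      rw [hAx, hBx, hAy, hBy, hAz, hBz, mterm_self, mterm_self]
      linarith [core2]
    by_cases hc3 : c = z
    · subst hc3
      rw [hAx, hBx, hAy, hBy, hAz, hBz, mterm_self, mterm_self]
      linarith [core3]
    · rw [hAo c hc1 hc2 hc3, hBo c hc1 hc2 hc3, hAx, hBx, hAy, hBy, hAz, hBz]
      obtain ⟨t1, t2, t3⟩ := tshift (G.head c) (G.foot c)
        (head_ne_head hG hc1) (head_ne_head hG hc2) (head_ne_foot hG c x)
        (head_ne_foot hG c z) (head_ne_foot hG c y) (head_ne_head hG hc3)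
        (Ne.symm (head_ne_foot hG x c)) (Ne.symm (head_ne_foot hG y c))
        (foot_ne_foot hG hc1) (foot_ne_foot hG hc3) (foot_ne_foot hG hc2)
        (Ne.symm (head_ne_foot hG z c))
      rw [mterm_congr (G.sign x) t1 t2, mterm_congr (G.sign y) t1.symm t3,
        mterm_congr (G.sign z) t3.symm t2.symm]
      ring
  unfold GaussDiagram.cardA
  exact Fintype.sum_bijective e hbe _ _ (fun c => by rw [hpar c, hsgn c])

end GDAux

namespace GDAux
open GaussDiagram

lemma prod_ite_zero {k : ℕ} (P : Fin k → Prop) [DecidablePred P] (f : Fin k → ℤ) :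
    (∏ j, if P j then f j else 0) = if (∀ j, P j) then ∏ j, f j else 0 := by
  by_cases h : ∀ j, P j
  · rw [if_pos h]
    exact Finset.prod_congr rfl fun j _ => if_pos (h j)
  · obtain ⟨j, hj⟩ := not_forall.1 h
    rw [if_neg h]
    exact Finset.prod_eq_zero (Finset.mem_univ j) (if_neg hj)

lemma cardATuple_eq_prod (G : GaussDiagram) {k : ℕ} (Z : Fin k → ℤ) :
    G.cardATuple Z = ∏ j, G.cardA (Z j) := by
  unfold GaussDiagram.cardATuple GaussDiagram.cardA
  rw [Finset.prod_univ_sum, Fintype.piFinset_univ]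
  apply Finset.sum_congr rfl
  intro t _
  exact (prod_ite_zero (fun j => G.parity (t j) = Z j) (fun j => G.sign (t j))).symm

lemma cardA_move {G G' : GaussDiagram} (h : GaussMove G G') {i : ℤ} (hi : i ≠ 0) :
    G.cardA i = G'.cardA i := by
  rcases h with h | h | h | h | h | h
  · exact cardA_single h hi
  · exact (cardA_single h hi).symm
  · exact cardA_two h i
  · exact (cardA_two h i).symm
  · exact cardA_triangle h i
  · exact (cardA_triangle h i).symm

end GDAux


/-- For `Z = (z₁, …, z_n)` with `n ≥ 1`, all `z_j ≠ 0` and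
`z_j < z_{j+1}`, the signed cardinality `|A_Z|` is unchanged by a single chord move, a two
chord move or a triangle move — hence by any finite sequence of chord moves. -/
theorem cardATuple_invariant {n : ℕ} (hn : 1 ≤ n) (Z : Fin n → ℤ)
    (hZ : ∀ j, Z j ≠ 0) (hmono : StrictMono Z) (G G' : GaussDiagram)
    (h : Relation.ReflTransGen GaussMove G G') :
    G.cardATuple Z = G'.cardATuple Z := by
    induction h with
  | refl => rfl
  | tail hsteps hmove ih =>
      rw [ih, GDAux.cardATuple_eq_prod, GDAux.cardATuple_eq_prod]
      exact Finset.prod_congr rfl fun j _ => GDAux.cardA_move hmove (hZ j)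
end

section
/- Let i > 0 and let Z = (z_1, …, z_n) with 0 < z_1 < z_2 < … < z_n. If two Gauss diagrams G and G' are related by a single chord move, a two chord move, or a triangle move (and hence if they are related by any finite sequence of chord moves), then |V_i(G)| = |V_i(G')| and |V_Z(G)| = |V_Z(G')|. -/
/-! ## Auxiliary lemmas -/

def Arc (a b p : ℕ) : Prop := (a < b ∧ a < p ∧ p < b) ∨ (b ≤ a ∧ (p < b ∨ a < p))
instance (a b p : ℕ) : Decidable (Arc a b p) := by unfold Arc; infer_instance
def NAdj (m a b : ℕ) : Prop :=
  (b = a + 1 ∧ a + 1 < m) ∨ (b = 0 ∧ a + 1 = m) ∨ (a = b + 1 ∧ b + 1 < m) ∨ (a = 0 ∧ b + 1 = m)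
def SuccC (m a b : ℕ) : Prop := (b = a + 1 ∧ a + 1 < m) ∨ (b = 0 ∧ a + 1 = m)
instance (m a b : ℕ) : Decidable (SuccC m a b) := by unfold SuccC; infer_instance

lemma prim_rev {m α β γ : ℕ} (h1 : α < m) (h2 : β < m) (h3 : γ < m)
    (d1 : α ≠ β) (d2 : α ≠ γ) (d3 : β ≠ γ) : Arc α β γ ↔ ¬ Arc β α γ := by
  unfold Arc; omega

lemma prim_rot {m α β γ : ℕ} (h1 : α < m) (h2 : β < m) (h3 : γ < m)
    (d1 : α ≠ β) (d2 : α ≠ γ) (d3 : β ≠ γ) : Arc α β γ ↔ Arc γ α β := by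
  unfold Arc; omega

lemma prim_succ1 {m α β γ : ℕ} (h1 : α < m) (h2 : β < m) (h3 : γ < m)
    (n : NAdj m α γ) (d1 : α ≠ β) (d2 : α ≠ γ) (d3 : β ≠ γ) :
    Arc α β γ ↔ SuccC m α γ := by
  unfold Arc NAdj SuccC at *; omega

lemma prim_succ2 {m α β γ : ℕ} (h1 : α < m) (h2 : β < m) (h3 : γ < m)
    (n : NAdj m β γ) (d1 : α ≠ β) (d2 : α ≠ γ) (d3 : β ≠ γ) :
    Arc α β γ ↔ SuccC m γ β := by
  unfold Arc NAdj SuccC at *; omega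

lemma prim_ex1 {m α γ : ℕ} (h1 : α < m) (h3 : γ < m) (hm : 2 < m)
    (n : NAdj m α γ) (d : α ≠ γ) : SuccC m α γ ↔ ¬ SuccC m γ α := by
  unfold NAdj SuccC at *; omega

lemma nadj_symm {m a b : ℕ} (h : NAdj m a b) : NAdj m b a := by unfold NAdj at *; omega

/-- moving the tested point within an adjacent pair not meeting the base points. -/
lemma Arc_mem_shift {m a b p q : ℕ} (ha : a < m) (hb : b < m) (hp : p < m) (hq : q < m)
    (hpq : NAdj m p q) (h1 : a ≠ p) (h2 : a ≠ q) (h3 : b ≠ p) (h4 : b ≠ q) :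
    Arc a b p ↔ Arc a b q := by
  unfold Arc NAdj at *; omega

/-- an arc between adjacent base points has the same membership for all outside points. -/
lemma Arc_self_adj {m u v p q : ℕ} (hu : u < m) (hv : v < m) (hp : p < m) (hq : q < m)
    (huv : NAdj m u v) (h1 : p ≠ u) (h2 : p ≠ v) (h3 : q ≠ u) (h4 : q ≠ v) :
    Arc u v p ↔ Arc u v q := by
  unfold Arc NAdj at *; omega


lemma Arc_move {m a a' b b' p p' : ℕ} (ha : a < m) (ha' : a' < m) (hb : b < m)
    (hb' : b' < m) (hp : p < m) (hp' : p' < m)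
    (h1 : a = a' ∨ NAdj m a a') (h2 : b = b' ∨ NAdj m b b') (h3 : p = p' ∨ NAdj m p p')
    (d1 : a ≠ b) (d2 : a ≠ b') (d3 : a' ≠ b) (d4 : a' ≠ b')
    (d5 : a ≠ p) (d6 : a ≠ p') (d7 : a' ≠ p) (d8 : a' ≠ p')
    (d9 : b ≠ p) (d10 : b ≠ p') (d11 : b' ≠ p) (d12 : b' ≠ p') :
    Arc a b p ↔ Arc a' b' p' := by
  unfold Arc NAdj at *
  rcases h1 with h1|h1|h1|h1|h1 <;> rcases h2 with h2|h2|h2|h2|h2 <;>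
    rcases h3 with h3|h3|h3|h3|h3 <;> omega

def CrP (α β γ δ : ℕ) : Prop := ¬ (Arc α β γ ↔ Arc α β δ)
instance (α β γ δ : ℕ) : Decidable (CrP α β γ δ) := by unfold CrP; infer_instance

/-- contribution of chord `(γ→δ)` of sign `s` to the parity of chord `(α→β)`. -/
def CrT (α β γ δ : ℕ) (s : ℤ) : ℤ :=
  if CrP α β γ δ then s * (if Arc α β γ then 1 else -1) else 0

set_option maxHeartbeats 4000000 in
lemma tri_core {m a b c d p q : ℕ} {sx sy sz : ℤ}
    (ha : a < m) (hb : b < m) (hc : c < m) (hd : d < m) (hp : p < m) (hq : q < m)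
    (n1 : NAdj m a b) (n2 : NAdj m c d) (n3 : NAdj m p q)
    (dab : a ≠ b) (dac : a ≠ c) (dad : a ≠ d) (dap : a ≠ p) (daq : a ≠ q)
    (dbc : b ≠ c) (dbd : b ≠ d) (dbp : b ≠ p) (dbq : b ≠ q)
    (dcd : c ≠ d) (dcp : c ≠ p) (dcq : c ≠ q) (ddp : d ≠ p) (ddq : d ≠ q) (dpq : p ≠ q)
    (hadm :
      ((¬CrP a c b p ∧ ¬CrP b p q d ∧ ¬CrP a c q d ∨
        ¬CrP b d a q ∧ ¬CrP a q p c ∧ ¬CrP b d p c) ∧ sy = sz ∧ sx = -sy) ∨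
      ((CrP a c b p ∧ ¬CrP b p q d ∧ ¬CrP a c q d ∨
        CrP b d a q ∧ ¬CrP a q p c ∧ ¬CrP b d p c) ∧ sy = -sx ∧ sz = sx) ∨
      ((CrP a c q d ∧ ¬CrP a c b p ∧ ¬CrP b p q d ∨
        CrP b d p c ∧ ¬CrP b d a q ∧ ¬CrP a q p c) ∧ sz = -sx ∧ sy = sx) ∨
      ((CrP b p q d ∧ ¬CrP a c b p ∧ ¬CrP a c q d ∨
        CrP a q p c ∧ ¬CrP b d a q ∧ ¬CrP b d p c) ∧ sy = sx ∧ sz = sx)) :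
    (CrT b d a q sy + CrT b d p c sz = CrT a c b p sy + CrT a c q d sz) ∧
    (CrT a q b d sx + CrT a q p c sz = CrT b p a c sx + CrT b p q d sz) ∧
    (CrT p c b d sx + CrT p c a q sy = CrT q d a c sx + CrT q d b p sy) := by
  have hm : 2 < m := by omega
  have exS1 : SuccC m b a ↔ ¬ SuccC m a b := prim_ex1 hb ha hm (nadj_symm n1) dab.symm
  have exS2 : SuccC m d c ↔ ¬ SuccC m c d := prim_ex1 hd hc hm (nadj_symm n2) dcd.symm
  have exS3 : SuccC m q p ↔ ¬ SuccC m p q := prim_ex1 hq hp hm (nadj_symm n3) dpq.symm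
  -- dictionary: each atom in terms of S1 = SuccC m a b, S2 = SuccC m c d,
  -- S3 = SuccC m p q, O = Arc a c p
  have Eacb : Arc a c b ↔ SuccC m a b := prim_succ1 ha hc hb n1 dac dab dbc.symm
  have Eacq : Arc a c q ↔ Arc a c p :=
    Arc_mem_shift ha hc hq hp (nadj_symm n3) daq dap dcq dcp
  have Eacd : Arc a c d ↔ ¬ SuccC m c d := (prim_succ2 ha hc hd n2 dac dad dcd).trans exS2
  have Eaqb : Arc a q b ↔ SuccC m a b := prim_succ1 ha hq hb n1 daq dab dbq.symm
  have Eaqd : Arc a q d ↔ ¬ Arc a c p := by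
    rw [Arc_move ha ha hq hp hd hc (Or.inl rfl) (Or.inr (nadj_symm n3))
        (Or.inr (nadj_symm n2)) daq dap daq dap dad dac dad dac ddq.symm dcq.symm
        ddp.symm dcp.symm,
      prim_rot (m := m) ha hp hc dap dac dcp.symm,
      prim_rev (m := m) hc ha hp dac.symm dcp dap]
  have Eaqp : Arc a q p ↔ SuccC m p q := prim_succ2 ha hq hp (nadj_symm n3) daq dap dpq.symm
  have Eaqc : Arc a q c ↔ ¬ Arc a c p :=
    (Arc_mem_shift ha hq hc hd n2 dac dad dcq.symm ddq.symm).trans Eaqd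
  have Ebpa : Arc b p a ↔ ¬ SuccC m a b :=
    (prim_succ1 hb hp ha (nadj_symm n1) dbp dab.symm dap.symm).trans exS1
  have Ebpc : Arc b p c ↔ ¬ Arc a c p := by
    rw [prim_rot (m := m) hb hp hc dbp dbc dcp.symm,
        prim_rev (m := m) hc hb hp dbc.symm dcp dbp]
    exact not_congr (Arc_move hb ha hc hc hp hp (Or.inr (nadj_symm n1)) (Or.inl rfl)
      (Or.inl rfl) dbc dbc dac dac dbp dbp dap dap dcp dcp dcp dcp)
  have Ebpq : Arc b p q ↔ ¬ SuccC m p q := (prim_succ2 hb hp hq n3 dbp dbq dpq).trans exS3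
  have Ebpd : Arc b p d ↔ ¬ Arc a c p :=
    (Arc_mem_shift hb hp hd hc (nadj_symm n2) dbd dbc ddp.symm dcp.symm).trans Ebpc
  have Ebda : Arc b d a ↔ ¬ SuccC m a b :=
    (prim_succ1 hb hd ha (nadj_symm n1) dbd dab.symm dad.symm).trans exS1
  have Ebdq : Arc b d q ↔ Arc a c p :=
    Arc_move hb ha hd hc hq hp (Or.inr (nadj_symm n1)) (Or.inr (nadj_symm n2))
      (Or.inr (nadj_symm n3)) dbd dbc dad dac dbq dbp daq dap ddq ddp dcq dcp
  have Ebdp : Arc b d p ↔ Arc a c p :=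
    Arc_move hb ha hd hc hp hp (Or.inr (nadj_symm n1)) (Or.inr (nadj_symm n2))
      (Or.inl rfl) dbd dbc dad dac dbp dbp dap dap ddp ddp dcp dcp
  have Ebdc : Arc b d c ↔ SuccC m c d := prim_succ2 hb hd hc (nadj_symm n2) dbd dbc dcd.symm
  have Epcb : Arc p c b ↔ ¬ Arc a c p :=
    (prim_rot (m := m) hp hc hb dcp.symm dbp.symm dbc.symm).trans Ebpc
  have Epcd : Arc p c d ↔ ¬ SuccC m c d := (prim_succ2 hp hc hd n2 dcp.symm ddp.symm dcd).trans exS2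
  have Epca : Arc p c a ↔ ¬ Arc a c p :=
    (Arc_mem_shift hp hc ha hb n1 dap.symm dbp.symm dac.symm dbc.symm).trans Epcb
  have Epcq : Arc p c q ↔ SuccC m p q := prim_succ1 hp hc hq n3 dcp.symm dpq dcq
  have Eqda : Arc q d a ↔ ¬ Arc a c p :=
    (prim_rot (m := m) hq hd ha ddq.symm daq.symm dad.symm).trans Eaqd
  have Eqdc : Arc q d c ↔ SuccC m c d := prim_succ2 hq hd hc (nadj_symm n2) ddq.symm dcq.symm dcd.symm
  have Eqdb : Arc q d b ↔ ¬ Arc a c p :=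
    (Arc_mem_shift hq hd hb ha (nadj_symm n1) dbq.symm daq.symm dbd.symm dad.symm).trans Eqda
  have Eqdp : Arc q d p ↔ ¬ SuccC m p q :=
    (prim_succ1 hq hd hp (nadj_symm n3) ddq.symm dpq.symm ddp).trans exS3
  simp only [CrT, CrP, Eacb, Eacq, Eacd, Eaqb, Eaqd, Eaqp, Eaqc, Ebpa, Ebpc, Ebpq, Ebpd,
    Ebda, Ebdq, Ebdp, Ebdc, Epcb, Epcd, Epca, Epcq, Eqda, Eqdc, Eqdb, Eqdp] at hadm ⊢
  by_cases hS1 : SuccC m a b <;> by_cases hS2 : SuccC m c d <;> by_cases hS3 : SuccC m p q <;>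
    by_cases hO : Arc a c p <;>
    simp only [hS1, hS2, hS3, hO, iff_true, iff_false, true_iff, false_iff, not_true,
      not_false_iff, not_not, iff_self, true_and, and_true, false_and, and_false, or_false,
      false_or, if_true, if_false, eq_self_iff_true, not_false_eq_true] at hadm ⊢ <;>
    rcases hadm with ⟨h1, h2, h3⟩ | ⟨h1, h2, h3⟩ | ⟨h1, h2, h3⟩ | ⟨h1, h2, h3⟩ <;>
    simp_all <;> omega
lemma arc_eq_decide (a b p : ℕ) : arc a b p = decide (Arc a b p) := by
  unfold arc
  rcases Nat.lt_or_ge a b with h | h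
  · rw [if_pos h, decide_eq_decide]; unfold Arc; omega
  · rw [if_neg (by omega), decide_eq_decide]; unfold Arc; omega

lemma arc_iff_Arc (a b p : ℕ) : arc a b p = true ↔ Arc a b p := by
  rw [arc_eq_decide]; exact decide_eq_true_iff

lemma psucc_val {m : ℕ} (u : Fin m) :
    ((psucc u).1 = u.1 + 1 ∧ u.1 + 1 < m) ∨ ((psucc u).1 = 0 ∧ u.1 + 1 = m) := by
  have hu := u.2
  rcases Nat.lt_or_ge (u.1 + 1) m with h1 | h1
  · exact Or.inl ⟨by simp [psucc, Nat.mod_eq_of_lt h1], h1⟩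
  · have h2 : u.1 + 1 = m := by omega
    exact Or.inr ⟨by simp [psucc, h2], h2⟩

lemma adjPos_nadj {m : ℕ} {u v : Fin m} (h : adjPos u v) : NAdj m u.1 v.1 := by
  unfold NAdj
  rcases h with h | h
  · rcases psucc_val u with ⟨h1, h2⟩ | ⟨h1, h2⟩ <;> rw [h] <;> omega
  · rcases psucc_val v with ⟨h1, h2⟩ | ⟨h1, h2⟩ <;> rw [h] <;> omega

namespace GaussDiagram

variable {G : GaussDiagram}

lemma Proper.head_inj (hP : G.Proper) {i j : Fin G.n} (h : G.head i = G.head j) : i = j := by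
  have := hP.1 (a₁ := Sum.inl i) (a₂ := Sum.inl j) (by simpa using h)
  simpa using this

lemma Proper.foot_inj (hP : G.Proper) {i j : Fin G.n} (h : G.foot i = G.foot j) : i = j := by
  have := hP.1 (a₁ := Sum.inr i) (a₂ := Sum.inr j) (by simpa using h)
  simpa using this

lemma Proper.head_ne_foot (hP : G.Proper) (i j : Fin G.n) : G.head i ≠ G.foot j := by
  intro h
  have := hP.1 (a₁ := Sum.inl i) (a₂ := Sum.inr j) (by simpa using h)
  simp at this

lemma Proper.head_ne_head (hP : G.Proper) {i j : Fin G.n} (h : i ≠ j) : G.head i ≠ G.head j :=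
  fun hh => h (hP.head_inj hh)

lemma Proper.foot_ne_foot (hP : G.Proper) {i j : Fin G.n} (h : i ≠ j) : G.foot i ≠ G.foot j :=
  fun hh => h (hP.foot_inj hh)

/-- A parity summand, written through `CrT`. -/
lemma crossTerm (G : GaussDiagram) (cc xx : Fin G.n) (h : xx ≠ cc) :
    (if G.crosses cc xx then G.sign xx * G.inter cc xx else 0) =
      CrT (G.head cc).1 (G.foot cc).1 (G.head xx).1 (G.foot xx).1 (G.sign xx) := by
  have hb : (xx != cc) = true := by simpa using h
  unfold GaussDiagram.crosses GaussDiagram.inter CrT CrP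
  rw [hb, Bool.true_and]
  by_cases hA : Arc (G.head cc).1 (G.foot cc).1 (G.head xx).1 <;>
    by_cases hB : Arc (G.head cc).1 (G.foot cc).1 (G.foot xx).1 <;>
    simp [arc_eq_decide, hA, hB]

lemma crossTerm_self (G : GaussDiagram) (cc : Fin G.n) :
    (if G.crosses cc cc then G.sign cc * G.inter cc cc else 0) = 0 := by
  simp [GaussDiagram.crosses]

lemma crosses_eq_false_iff (G : GaussDiagram) (cc xx : Fin G.n) (h : xx ≠ cc) :
    G.crosses cc xx = false ↔
      ¬ CrP (G.head cc).1 (G.foot cc).1 (G.head xx).1 (G.foot xx).1 := by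
  have hb : (xx != cc) = true := by simpa using h
  unfold GaussDiagram.crosses CrP
  rw [hb, Bool.true_and]
  by_cases hA : Arc (G.head cc).1 (G.foot cc).1 (G.head xx).1 <;>
    by_cases hB : Arc (G.head cc).1 (G.foot cc).1 (G.foot xx).1 <;>
    simp [arc_eq_decide, hA, hB]

lemma crosses_eq_true_iff (G : GaussDiagram) (cc xx : Fin G.n) (h : xx ≠ cc) :
    G.crosses cc xx = true ↔
      CrP (G.head cc).1 (G.foot cc).1 (G.head xx).1 (G.foot xx).1 := by
  have hb : (xx != cc) = true := by simpa using h
  unfold GaussDiagram.crosses CrP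
  rw [hb, Bool.true_and]
  by_cases hA : Arc (G.head cc).1 (G.foot cc).1 (G.head xx).1 <;>
    by_cases hB : Arc (G.head cc).1 (G.foot cc).1 (G.foot xx).1 <;>
    simp [arc_eq_decide, hA, hB]

end GaussDiagram
lemma vne {m : ℕ} {u v : Fin m} (h : u ≠ v) : u.1 ≠ v.1 :=
  fun hh => h (Fin.val_injective hh)

lemma two_mutual {m h1 f1 h2 f2 : ℕ} (b1 : h1 < m) (b2 : f1 < m) (b3 : h2 < m) (b4 : f2 < m)
    (nh : NAdj m h1 h2) (nf : NAdj m f1 f2)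
    (d1 : h1 ≠ f1) (d2 : h1 ≠ h2) (d3 : h1 ≠ f2) (d4 : f1 ≠ h2) (d5 : f1 ≠ f2) (d6 : h2 ≠ f2)
    (s : ℤ) : CrT h1 f1 h2 f2 s = CrT h2 f2 h1 f1 (-s) := by
  have hm : 2 < m := by omega
  have E1 : Arc h1 f1 h2 ↔ SuccC m h1 h2 := prim_succ1 b1 b2 b3 nh d1 d2 d4
  have E2 : Arc h1 f1 f2 ↔ ¬ SuccC m f1 f2 :=
    (prim_succ2 b1 b2 b4 nf d1 d3 d5).trans (prim_ex1 b4 b2 hm (nadj_symm nf) d5.symm)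
  have E3 : Arc h2 f2 h1 ↔ ¬ SuccC m h1 h2 :=
    (prim_succ1 b3 b4 b1 (nadj_symm nh) d6 d2.symm d3.symm).trans
      (prim_ex1 b3 b1 hm (nadj_symm nh) d2.symm)
  have E4 : Arc h2 f2 f1 ↔ SuccC m f1 f2 := prim_succ2 b3 b4 b2 (nadj_symm nf) d6 d4.symm d5.symm
  unfold CrT CrP
  by_cases hH : SuccC m h1 h2 <;> by_cases hF : SuccC m f1 f2 <;>
    simp [E1, E2, E3, E4, hH, hF] <;> ring

namespace GaussDiagram

lemma cardV_single {G G' : GaussDiagram} (h : SingleChordMove G G') {i : ℤ} (hi : i ≠ 0) :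
    G.cardV i = G'.cardV i := by
  obtain ⟨hP, hP', hn, e, φ, y, he, hey, hφ, hmap, hadj⟩ := h
  have hna : NAdj (2 * G'.n) (G'.head y).1 (G'.foot y).1 := adjPos_nadj hadj
  have hE : Function.Bijective (Sum.elim e fun _ : Unit => y) := by
    rw [Fintype.bijective_iff_injective_and_card]
    refine ⟨?_, by simp [hn]⟩
    rintro (a | a) (b | b) hst
    · simp only [Sum.elim_inl] at hst; rw [he hst]
    · exact absurd hst (hey a)
    · exact absurd hst.symm (hey b)
    · exact congrArg Sum.inr (Subsingleton.elim a b)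
  have hsum : ∀ F : Fin G'.n → ℤ, (∑ c, F c) = (∑ j, F (e j)) + F y := by
    intro F
    rw [← Function.Bijective.sum_comp hE F, Fintype.sum_sum_type]
    simp
  have hcr : ∀ j x : Fin G.n, G'.crosses (e j) (e x) = G.crosses j x := by
    intro j x
    unfold GaussDiagram.crosses
    rw [(hmap j).1, (hmap j).2.1, (hmap x).1, (hmap x).2.1,
      ← hφ (G.head j) (G.foot j) (G.head x), ← hφ (G.head j) (G.foot j) (G.foot x)]
    congr 1
    by_cases hxj : x = j
    · subst hxj; rw [bne_self_eq_false, bne_self_eq_false]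
    · have h2 : e x ≠ e j := fun hh => hxj (he hh)
      rw [bne_iff_ne.mpr h2, bne_iff_ne.mpr hxj]
  have hint : ∀ j x : Fin G.n, G'.inter (e j) (e x) = G.inter j x := by
    intro j x
    unfold GaussDiagram.inter
    rw [(hmap j).1, (hmap j).2.1, (hmap x).1, ← hφ (G.head j) (G.foot j) (G.head x)]
  have hcry : ∀ j : Fin G.n, G'.crosses (e j) y = false := by
    intro j
    unfold GaussDiagram.crosses
    have h1 : (G'.head (e j)).1 ≠ (G'.head y).1 := vne (hP'.head_ne_head (hey j))
    have h2 : (G'.head (e j)).1 ≠ (G'.foot y).1 := vne (hP'.head_ne_foot _ _)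
    have h3 : (G'.foot (e j)).1 ≠ (G'.head y).1 := vne (Ne.symm (hP'.head_ne_foot y (e j)))
    have h4 : (G'.foot (e j)).1 ≠ (G'.foot y).1 := vne (hP'.foot_ne_foot (hey j))
    have harc : arc (G'.head (e j)).1 (G'.foot (e j)).1 (G'.head y).1
        = arc (G'.head (e j)).1 (G'.foot (e j)).1 (G'.foot y).1 := by
      rw [arc_eq_decide, arc_eq_decide, decide_eq_decide]
      exact Arc_mem_shift (G'.head (e j)).2 (G'.foot (e j)).2 (G'.head y).2 (G'.foot y).2
        hna h1 h2 h3 h4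
    simp [harc]
  have hcry2 : ∀ c : Fin G'.n, G'.crosses y c = false := by
    intro c
    by_cases hcy : c = y
    · simp [hcy, GaussDiagram.crosses]
    · unfold GaussDiagram.crosses
      have h1 : (G'.head c).1 ≠ (G'.head y).1 := vne (hP'.head_ne_head hcy)
      have h2 : (G'.head c).1 ≠ (G'.foot y).1 := vne (hP'.head_ne_foot _ _)
      have h3 : (G'.foot c).1 ≠ (G'.head y).1 := vne (Ne.symm (hP'.head_ne_foot y c))
      have h4 : (G'.foot c).1 ≠ (G'.foot y).1 := vne (hP'.foot_ne_foot hcy)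
      have harc : arc (G'.head y).1 (G'.foot y).1 (G'.head c).1
          = arc (G'.head y).1 (G'.foot y).1 (G'.foot c).1 := by
        rw [arc_eq_decide, arc_eq_decide, decide_eq_decide]
        exact Arc_self_adj (G'.head y).2 (G'.foot y).2 (G'.head c).2 (G'.foot c).2
          hna h1 h2 h3 h4
      simp [harc]
  have hpary : G'.parity y = 0 := by
    unfold GaussDiagram.parity
    exact Finset.sum_eq_zero fun c _ => by simp [hcry2 c]
  have hpar : ∀ j, G'.parity (e j) = G.parity j := by
    intro j
    unfold GaussDiagram.parity
    rw [hsum]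
    rw [show (if G'.crosses (e j) y then G'.sign y * G'.inter (e j) y else 0) = 0 by
      simp [hcry j]]
    rw [add_zero]
    exact Finset.sum_congr rfl fun x _ => by rw [hcr, hint, (hmap x).2.2]
  unfold GaussDiagram.cardV
  rw [hsum fun c => if |G'.parity c| = i then G'.sign c else 0]
  rw [show (if |G'.parity y| = i then G'.sign y else 0) = 0 by
    rw [hpary]; simp; exact fun hh => (hi hh.symm).elim]
  rw [add_zero]
  exact Finset.sum_congr rfl fun j _ => by rw [hpar, (hmap j).2.2]
end GaussDiagram
namespace GaussDiagram

lemma cardV_two {G G' : GaussDiagram} (h : TwoChordMove G G') (i : ℤ) :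
    G.cardV i = G'.cardV i := by
  obtain ⟨hP, hP', hn, e, φ, y₁, y₂, he, hy12, hey, hφ, hmap, hadjh, hadjf, hsgn⟩ := h
  have nh : NAdj (2 * G'.n) (G'.head y₁).1 (G'.head y₂).1 := adjPos_nadj hadjh
  have nf : NAdj (2 * G'.n) (G'.foot y₁).1 (G'.foot y₂).1 := adjPos_nadj hadjf
  -- distinctness of the four new endpoints
  have dh12 : (G'.head y₁).1 ≠ (G'.head y₂).1 := vne (hP'.head_ne_head hy12)
  have dhf1 : (G'.head y₁).1 ≠ (G'.foot y₁).1 := vne (hP'.head_ne_foot _ _)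
  have dhf2 : (G'.head y₁).1 ≠ (G'.foot y₂).1 := vne (hP'.head_ne_foot _ _)
  have dh2f1 : (G'.head y₂).1 ≠ (G'.foot y₁).1 := vne (hP'.head_ne_foot _ _)
  have dh2f2 : (G'.head y₂).1 ≠ (G'.foot y₂).1 := vne (hP'.head_ne_foot _ _)
  have df12 : (G'.foot y₁).1 ≠ (G'.foot y₂).1 := vne (hP'.foot_ne_foot hy12)
  have hE : Function.Bijective (Sum.elim e fun b : Bool => cond b y₁ y₂) := by
    rw [Fintype.bijective_iff_injective_and_card]
    refine ⟨?_, by simp [hn]⟩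
    rintro (a | a) (b | b) hst
    · simp only [Sum.elim_inl] at hst; rw [he hst]
    · exfalso; simp only [Sum.elim_inl, Sum.elim_inr] at hst
      cases b
      · exact (hey a).2 hst
      · exact (hey a).1 hst
    · exfalso; simp only [Sum.elim_inl, Sum.elim_inr] at hst
      cases a
      · exact (hey b).2 hst.symm
      · exact (hey b).1 hst.symm
    · simp only [Sum.elim_inr] at hst
      cases a <;> cases b <;> simp_all [hy12]
  have hsum : ∀ F : Fin G'.n → ℤ, (∑ c, F c) = (∑ j, F (e j)) + (F y₁ + F y₂) := by
    intro F
    rw [← Function.Bijective.sum_comp hE F, Fintype.sum_sum_type, Fintype.sum_bool]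
    simp
  have hcr : ∀ j x : Fin G.n, G'.crosses (e j) (e x) = G.crosses j x := by
    intro j x
    unfold GaussDiagram.crosses
    rw [(hmap j).1, (hmap j).2.1, (hmap x).1, (hmap x).2.1,
      ← hφ (G.head j) (G.foot j) (G.head x), ← hφ (G.head j) (G.foot j) (G.foot x)]
    congr 1
    by_cases hxj : x = j
    · subst hxj; rw [bne_self_eq_false, bne_self_eq_false]
    · have h2 : e x ≠ e j := fun hh => hxj (he hh)
      rw [bne_iff_ne.mpr h2, bne_iff_ne.mpr hxj]
  have hint : ∀ j x : Fin G.n, G'.inter (e j) (e x) = G.inter j x := by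
    intro j x
    unfold GaussDiagram.inter
    rw [(hmap j).1, (hmap j).2.1, (hmap x).1, ← hφ (G.head j) (G.foot j) (G.head x)]
  -- the two new chords cross / don't cross other chords together
  have hcry : ∀ j : Fin G.n, G'.crosses (e j) y₁ = G'.crosses (e j) y₂ ∧
      G'.inter (e j) y₁ = G'.inter (e j) y₂ := by
    intro j
    have a1 : (G'.head (e j)).1 ≠ (G'.head y₁).1 := vne (hP'.head_ne_head (hey j).1)
    have a2 : (G'.head (e j)).1 ≠ (G'.head y₂).1 := vne (hP'.head_ne_head (hey j).2)
    have a3 : (G'.head (e j)).1 ≠ (G'.foot y₁).1 := vne (hP'.head_ne_foot _ _)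
    have a4 : (G'.head (e j)).1 ≠ (G'.foot y₂).1 := vne (hP'.head_ne_foot _ _)
    have a5 : (G'.foot (e j)).1 ≠ (G'.head y₁).1 := vne (Ne.symm (hP'.head_ne_foot _ _))
    have a6 : (G'.foot (e j)).1 ≠ (G'.head y₂).1 := vne (Ne.symm (hP'.head_ne_foot _ _))
    have a7 : (G'.foot (e j)).1 ≠ (G'.foot y₁).1 := vne (hP'.foot_ne_foot (hey j).1)
    have a8 : (G'.foot (e j)).1 ≠ (G'.foot y₂).1 := vne (hP'.foot_ne_foot (hey j).2)
    have harcH : arc (G'.head (e j)).1 (G'.foot (e j)).1 (G'.head y₁).1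
        = arc (G'.head (e j)).1 (G'.foot (e j)).1 (G'.head y₂).1 := by
      rw [arc_eq_decide, arc_eq_decide, decide_eq_decide]
      exact Arc_mem_shift (G'.head (e j)).2 (G'.foot (e j)).2 (G'.head y₁).2 (G'.head y₂).2
        nh a1 a2 a5 a6
    have harcF : arc (G'.head (e j)).1 (G'.foot (e j)).1 (G'.foot y₁).1
        = arc (G'.head (e j)).1 (G'.foot (e j)).1 (G'.foot y₂).1 := by
      rw [arc_eq_decide, arc_eq_decide, decide_eq_decide]
      exact Arc_mem_shift (G'.head (e j)).2 (G'.foot (e j)).2 (G'.foot y₁).2 (G'.foot y₂).2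
        nf a3 a4 a7 a8
    constructor
    · unfold GaussDiagram.crosses
      rw [harcH, harcF, bne_iff_ne.mpr (Ne.symm (hey j).1), bne_iff_ne.mpr (Ne.symm (hey j).2)]
    · unfold GaussDiagram.inter
      rw [harcH]
  have hcancel : ∀ j : Fin G.n,
      (if G'.crosses (e j) y₁ then G'.sign y₁ * G'.inter (e j) y₁ else 0) +
      (if G'.crosses (e j) y₂ then G'.sign y₂ * G'.inter (e j) y₂ else 0) = 0 := by
    intro j
    rw [(hcry j).1, (hcry j).2, hsgn]
    by_cases hc : G'.crosses (e j) y₂ <;> simp [hc] <;> ring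
  have hpar : ∀ j, G'.parity (e j) = G.parity j := by
    intro j
    unfold GaussDiagram.parity
    rw [hsum, hcancel j, add_zero]
    exact Finset.sum_congr rfl fun x _ => by rw [hcr, hint, (hmap x).2.2]
  -- the two new chords have equal parity
  have hpar12 : G'.parity y₁ = G'.parity y₂ := by
    unfold GaussDiagram.parity
    rw [hsum, hsum]
    congr 1
    · refine Finset.sum_congr rfl fun x _ => ?_
      have b1 : (G'.head (e x)).1 ≠ (G'.head y₁).1 := vne (hP'.head_ne_head (hey x).1)
      have b2 : (G'.head (e x)).1 ≠ (G'.head y₂).1 := vne (hP'.head_ne_head (hey x).2)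
      have b3 : (G'.foot (e x)).1 ≠ (G'.head y₁).1 := vne (Ne.symm (hP'.head_ne_foot _ _))
      have b4 : (G'.foot (e x)).1 ≠ (G'.head y₂).1 := vne (Ne.symm (hP'.head_ne_foot _ _))
      have b5 : (G'.head (e x)).1 ≠ (G'.foot y₁).1 := vne (hP'.head_ne_foot _ _)
      have b6 : (G'.head (e x)).1 ≠ (G'.foot y₂).1 := vne (hP'.head_ne_foot _ _)
      have b7 : (G'.foot (e x)).1 ≠ (G'.foot y₁).1 := vne (hP'.foot_ne_foot (hey x).1)
      have b8 : (G'.foot (e x)).1 ≠ (G'.foot y₂).1 := vne (hP'.foot_ne_foot (hey x).2)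
      have harc1 : arc (G'.head y₁).1 (G'.foot y₁).1 (G'.head (e x)).1
          = arc (G'.head y₂).1 (G'.foot y₂).1 (G'.head (e x)).1 := by
        rw [arc_eq_decide, arc_eq_decide, decide_eq_decide]
        exact Arc_move (G'.head y₁).2 (G'.head y₂).2 (G'.foot y₁).2 (G'.foot y₂).2
          (G'.head (e x)).2 (G'.head (e x)).2 (Or.inr nh) (Or.inr nf) (Or.inl rfl)
          dhf1 dhf2 dh2f1 dh2f2 b1.symm b1.symm b2.symm b2.symm b5.symm b5.symm b6.symm b6.symm
      have harc2 : arc (G'.head y₁).1 (G'.foot y₁).1 (G'.foot (e x)).1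
          = arc (G'.head y₂).1 (G'.foot y₂).1 (G'.foot (e x)).1 := by
        rw [arc_eq_decide, arc_eq_decide, decide_eq_decide]
        exact Arc_move (G'.head y₁).2 (G'.head y₂).2 (G'.foot y₁).2 (G'.foot y₂).2
          (G'.foot (e x)).2 (G'.foot (e x)).2 (Or.inr nh) (Or.inr nf) (Or.inl rfl)
          dhf1 dhf2 dh2f1 dh2f2 b3.symm b3.symm b4.symm b4.symm b7.symm b7.symm b8.symm b8.symm
      have hc12 : G'.crosses y₁ (e x) = G'.crosses y₂ (e x) := by
        unfold GaussDiagram.crosses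
        rw [harc1, harc2, bne_iff_ne.mpr (hey x).1, bne_iff_ne.mpr (hey x).2]
      have hi12 : G'.inter y₁ (e x) = G'.inter y₂ (e x) := by
        unfold GaussDiagram.inter
        rw [harc1]
      rw [hc12, hi12]
    · -- mutual terms
      rw [crossTerm_self G' y₁, crossTerm_self G' y₂,
        crossTerm G' y₁ y₂ hy12.symm, crossTerm G' y₂ y₁ hy12, hsgn, zero_add, add_zero]
      exact two_mutual (G'.head y₁).2 (G'.foot y₁).2 (G'.head y₂).2 (G'.foot y₂).2
        nh nf dhf1 dh12 dhf2 dh2f1.symm df12 dh2f2 (G'.sign y₂)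
  unfold GaussDiagram.cardV
  rw [hsum fun c => if |G'.parity c| = i then G'.sign c else 0]
  rw [show ((if |G'.parity y₁| = i then G'.sign y₁ else 0) +
      (if |G'.parity y₂| = i then G'.sign y₂ else 0)) = 0 by
    rw [hpar12, hsgn]; by_cases hcc : |G'.parity y₂| = i <;> simp [hcc]]
  rw [add_zero]
  exact (Finset.sum_congr rfl fun j _ => by rw [hpar, (hmap j).2.2]).symm

end GaussDiagram
lemma succC_iff_noInside {m : ℕ} (u v : Fin m) (huv : u.1 ≠ v.1) :
    SuccC m u.1 v.1 ↔ ∀ p : Fin m, ¬ Arc u.1 v.1 p.1 := by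
  constructor
  · intro h p
    have hp := p.2
    have hu := u.2
    unfold SuccC Arc at *; omega
  · intro h
    have h2 := h (psucc u)
    have h3 := psucc_val u
    have hu := u.2; have hv := v.2
    unfold SuccC Arc at *; omega

lemma cyclic_NAdj {k l : ℕ} {φ : Fin k → Fin l} (hφ : CyclicMap φ)
    (hb : Function.Bijective φ) {u v : Fin k} (huv : u ≠ v) (h : NAdj k u.1 v.1) :
    NAdj l (φ u).1 (φ v).1 := by
  have hvv : (φ u).1 ≠ (φ v).1 := vne fun hh => huv (hb.1 hh)
  have hne := vne huv
  have key : ∀ a b : Fin k, a.1 ≠ b.1 → SuccC k a.1 b.1 → SuccC l (φ a).1 (φ b).1 := by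
    intro a b hab hS
    have habf : a ≠ b := fun hh => hab (congrArg Fin.val hh)
    rw [succC_iff_noInside (φ a) (φ b) (vne fun hh => habf (hb.1 hh))]
    intro p' hArc
    obtain ⟨p, rfl⟩ := hb.2 p'
    have : Arc a.1 b.1 p.1 := by rw [← arc_iff_Arc, hφ a b p, arc_iff_Arc]; exact hArc
    exact (succC_iff_noInside a b hab).mp hS p this
  have hsplit : SuccC k u.1 v.1 ∨ SuccC k v.1 u.1 := by unfold NAdj SuccC at *; omega
  rcases hsplit with h1 | h1
  · have := key u v hne h1; unfold SuccC NAdj at *; omega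
  · have := key v u hne.symm h1; unfold SuccC NAdj at *; omega

namespace GaussDiagram

set_option maxHeartbeats 1000000 in
lemma cardV_triangle {G G' : GaussDiagram} (h : TriangleMove G G') (i : ℤ) :
    G.cardV i = G'.cardV i := by
  obtain ⟨hP, hP', e, φ, x, y, z, w₁, w₂, w₃, hE, hΦ, hφ, hTV, hsgn, hout, hslide, hAdm⟩ := h
  obtain ⟨hxy, hyz, hxz, hv1, hv2, hv3⟩ := hTV
  obtain ⟨⟨hsx, hsy⟩, ⟨hsfx, hsfz⟩, ⟨hsfy, hshz⟩⟩ := hslide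
  -- adjacency of the vertex pairs
  have adj1 : adjPos (G.head x) (G.head y) := by
    rcases hv1 with ⟨h1, h2⟩ | ⟨h1, h2⟩
    · exact Or.inl (by rw [h1, h2])
    · exact Or.inr (by rw [h1, h2])
  have adj2 : adjPos (G.foot x) (G.foot z) := by
    rcases hv2 with ⟨h1, h2⟩ | ⟨h1, h2⟩
    · exact Or.inl (by rw [h1, h2])
    · exact Or.inr (by rw [h1, h2])
  have adj3 : adjPos (G.foot y) (G.head z) := by
    rcases hv3 with ⟨h1, h2⟩ | ⟨h1, h2⟩
    · exact Or.inl (by rw [h1, h2])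
    · exact Or.inr (by rw [h1, h2])
  have na1 : NAdj (2 * G.n) (G.head x).1 (G.head y).1 := adjPos_nadj adj1
  have na2 : NAdj (2 * G.n) (G.foot x).1 (G.foot z).1 := adjPos_nadj adj2
  have na3 : NAdj (2 * G.n) (G.foot y).1 (G.head z).1 := adjPos_nadj adj3
  -- distinctness of the six triangle endpoints
  have dab : (G.head x).1 ≠ (G.head y).1 := vne (hP.head_ne_head hxy)
  have dac : (G.head x).1 ≠ (G.foot x).1 := vne (hP.head_ne_foot x x)
  have dad : (G.head x).1 ≠ (G.foot z).1 := vne (hP.head_ne_foot x z)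
  have dap : (G.head x).1 ≠ (G.foot y).1 := vne (hP.head_ne_foot x y)
  have daq : (G.head x).1 ≠ (G.head z).1 := vne (hP.head_ne_head hxz)
  have dbc : (G.head y).1 ≠ (G.foot x).1 := vne (hP.head_ne_foot y x)
  have dbd : (G.head y).1 ≠ (G.foot z).1 := vne (hP.head_ne_foot y z)
  have dbp : (G.head y).1 ≠ (G.foot y).1 := vne (hP.head_ne_foot y y)
  have dbq : (G.head y).1 ≠ (G.head z).1 := vne (hP.head_ne_head hyz)
  have dcd : (G.foot x).1 ≠ (G.foot z).1 := vne (hP.foot_ne_foot hxz)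
  have dcp : (G.foot x).1 ≠ (G.foot y).1 := vne (hP.foot_ne_foot hxy)
  have dcq : (G.foot x).1 ≠ (G.head z).1 := vne (Ne.symm (hP.head_ne_foot z x))
  have ddp : (G.foot z).1 ≠ (G.foot y).1 := vne (Ne.symm (hP.foot_ne_foot hyz))
  have ddq : (G.foot z).1 ≠ (G.head z).1 := vne (Ne.symm (hP.head_ne_foot z z))
  have dpq : (G.foot y).1 ≠ (G.head z).1 := vne (Ne.symm (hP.head_ne_foot z y))
  -- transporting arcs through φ
  have Arcφ : ∀ a b c : Fin (2 * G.n), Arc (φ a).1 (φ b).1 (φ c).1 ↔ Arc a.1 b.1 c.1 := by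
    intro a b c; rw [← arc_iff_Arc, ← arc_iff_Arc, ← hφ a b c]
  have CrPφ : ∀ a b c d : Fin (2 * G.n),
      CrP (φ a).1 (φ b).1 (φ c).1 (φ d).1 ↔ CrP a.1 b.1 c.1 d.1 := by
    intro a b c d; unfold CrP; rw [Arcφ a b c, Arcφ a b d]
  have CrTφ : ∀ (a b c d : Fin (2 * G.n)) (s : ℤ),
      CrT (φ a).1 (φ b).1 (φ c).1 (φ d).1 s = CrT a.1 b.1 c.1 d.1 s := by
    intro a b c d s; unfold CrT
    simp only [CrPφ a b c d, Arcφ a b c]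
  have nexy : e y ≠ e x := fun hh => hxy (hE.1 hh).symm
  have nexz : e z ≠ e x := fun hh => hxz (hE.1 hh).symm
  have neyz : e z ≠ e y := fun hh => hyz (hE.1 hh).symm
  -- primed crossing bridges
  have pxyF := crosses_eq_false_iff G' (e x) (e y) nexy
  have pxyT := crosses_eq_true_iff G' (e x) (e y) nexy
  rw [hsx, hsfx, hsy, hsfy, CrPφ] at pxyF pxyT
  have pxzF := crosses_eq_false_iff G' (e x) (e z) nexz
  have pxzT := crosses_eq_true_iff G' (e x) (e z) nexz
  rw [hsx, hsfx, hshz, hsfz, CrPφ] at pxzF pxzT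
  have pyzF := crosses_eq_false_iff G' (e y) (e z) neyz
  have pyzT := crosses_eq_true_iff G' (e y) (e z) neyz
  rw [hsy, hsfy, hshz, hsfz, CrPφ] at pyzF pyzT
  -- unprimed crossing bridges
  have qxyF := crosses_eq_false_iff G x y (Ne.symm hxy)
  have qxyT := crosses_eq_true_iff G x y (Ne.symm hxy)
  have qxzF := crosses_eq_false_iff G x z (Ne.symm hxz)
  have qxzT := crosses_eq_true_iff G x z (Ne.symm hxz)
  have qyzF := crosses_eq_false_iff G y z (Ne.symm hyz)
  have qyzT := crosses_eq_true_iff G y z (Ne.symm hyz)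
  -- the admissibility hypothesis, in arithmetic form
  have hadm :
      ((¬CrP (G.head x).1 (G.foot x).1 (G.head y).1 (G.foot y).1 ∧
        ¬CrP (G.head y).1 (G.foot y).1 (G.head z).1 (G.foot z).1 ∧
        ¬CrP (G.head x).1 (G.foot x).1 (G.head z).1 (G.foot z).1 ∨
        ¬CrP (G.head y).1 (G.foot z).1 (G.head x).1 (G.head z).1 ∧
        ¬CrP (G.head x).1 (G.head z).1 (G.foot y).1 (G.foot x).1 ∧
        ¬CrP (G.head y).1 (G.foot z).1 (G.foot y).1 (G.foot x).1) ∧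
        G.sign y = G.sign z ∧ G.sign x = -G.sign y) ∨
      ((CrP (G.head x).1 (G.foot x).1 (G.head y).1 (G.foot y).1 ∧
        ¬CrP (G.head y).1 (G.foot y).1 (G.head z).1 (G.foot z).1 ∧
        ¬CrP (G.head x).1 (G.foot x).1 (G.head z).1 (G.foot z).1 ∨
        CrP (G.head y).1 (G.foot z).1 (G.head x).1 (G.head z).1 ∧
        ¬CrP (G.head x).1 (G.head z).1 (G.foot y).1 (G.foot x).1 ∧
        ¬CrP (G.head y).1 (G.foot z).1 (G.foot y).1 (G.foot x).1) ∧
        G.sign y = -G.sign x ∧ G.sign z = G.sign x) ∨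
      ((CrP (G.head x).1 (G.foot x).1 (G.head z).1 (G.foot z).1 ∧
        ¬CrP (G.head x).1 (G.foot x).1 (G.head y).1 (G.foot y).1 ∧
        ¬CrP (G.head y).1 (G.foot y).1 (G.head z).1 (G.foot z).1 ∨
        CrP (G.head y).1 (G.foot z).1 (G.foot y).1 (G.foot x).1 ∧
        ¬CrP (G.head y).1 (G.foot z).1 (G.head x).1 (G.head z).1 ∧
        ¬CrP (G.head x).1 (G.head z).1 (G.foot y).1 (G.foot x).1) ∧
        G.sign z = -G.sign x ∧ G.sign y = G.sign x) ∨
      ((CrP (G.head y).1 (G.foot y).1 (G.head z).1 (G.foot z).1 ∧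
        ¬CrP (G.head x).1 (G.foot x).1 (G.head y).1 (G.foot y).1 ∧
        ¬CrP (G.head x).1 (G.foot x).1 (G.head z).1 (G.foot z).1 ∨
        CrP (G.head x).1 (G.head z).1 (G.foot y).1 (G.foot x).1 ∧
        ¬CrP (G.head y).1 (G.foot z).1 (G.head x).1 (G.head z).1 ∧
        ¬CrP (G.head y).1 (G.foot z).1 (G.foot y).1 (G.foot x).1) ∧
        G.sign y = G.sign x ∧ G.sign z = G.sign x) := by
    rcases hAdm with ⟨hside, h1, h2⟩ | ⟨hside, h1, h2⟩ | ⟨hside, h1, h2⟩ | ⟨hside, h1, h2⟩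
    · refine Or.inl ⟨?_, h1, h2⟩
      rcases hside with ⟨c1, c2, c3⟩ | ⟨c1, c2, c3⟩
      · exact Or.inl ⟨qxyF.mp c1, qyzF.mp c2, qxzF.mp c3⟩
      · exact Or.inr ⟨pxyF.mp c1, pyzF.mp c2, pxzF.mp c3⟩
    · refine Or.inr (Or.inl ⟨?_, h1, h2⟩)
      rcases hside with ⟨c1, c2, c3⟩ | ⟨c1, c2, c3⟩
      · exact Or.inl ⟨qxyT.mp c1, qyzF.mp c2, qxzF.mp c3⟩
      · exact Or.inr ⟨pxyT.mp c1, pyzF.mp c2, pxzF.mp c3⟩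
    · refine Or.inr (Or.inr (Or.inl ⟨?_, h1, h2⟩))
      rcases hside with ⟨c1, c2, c3⟩ | ⟨c1, c2, c3⟩
      · exact Or.inl ⟨qxzT.mp c1, qxyF.mp c2, qyzF.mp c3⟩
      · exact Or.inr ⟨pxzT.mp c1, pxyF.mp c2, pyzF.mp c3⟩
    · refine Or.inr (Or.inr (Or.inr ⟨?_, h1, h2⟩))
      rcases hside with ⟨c1, c2, c3⟩ | ⟨c1, c2, c3⟩
      · exact Or.inl ⟨qyzT.mp c1, qxyF.mp c2, qxzF.mp c3⟩
      · exact Or.inr ⟨pyzT.mp c1, pxyF.mp c2, pxzF.mp c3⟩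
  have htri := tri_core (G.head x).2 (G.head y).2 (G.foot x).2 (G.foot z).2 (G.foot y).2
    (G.head z).2 na1 na2 na3 dab dac dad dap daq dbc dbd dbp dbq dcd dcp dcq ddp ddq dpq hadm
  -- Bool-level arc helpers
  have bshift : ∀ u v p q : Fin (2 * G.n), NAdj (2 * G.n) p.1 q.1 → u.1 ≠ p.1 → u.1 ≠ q.1 →
      v.1 ≠ p.1 → v.1 ≠ q.1 → arc u.1 v.1 p.1 = arc u.1 v.1 q.1 := by
    intro u v p q n h1 h2 h3 h4
    rw [arc_eq_decide, arc_eq_decide, decide_eq_decide]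
    exact Arc_mem_shift u.2 v.2 p.2 q.2 n h1 h2 h3 h4
  have bmove : ∀ u u' v v' p : Fin (2 * G.n), NAdj (2 * G.n) u.1 u'.1 →
      NAdj (2 * G.n) v.1 v'.1 → u.1 ≠ v.1 → u.1 ≠ v'.1 → u'.1 ≠ v.1 → u'.1 ≠ v'.1 →
      u.1 ≠ p.1 → u'.1 ≠ p.1 → v.1 ≠ p.1 → v'.1 ≠ p.1 →
      arc u.1 v.1 p.1 = arc u'.1 v'.1 p.1 := by
    intro u u' v v' p m1 m2 d1 d2 d3 d4 d5 d6 d7 d8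
    rw [arc_eq_decide, arc_eq_decide, decide_eq_decide]
    exact Arc_move u.2 u'.2 v.2 v'.2 p.2 p.2 (Or.inr m1) (Or.inr m2) (Or.inl rfl)
      d1 d2 d3 d4 d5 d5 d6 d6 d7 d7 d8 d8
  have hG'term : ∀ (j c : Fin G.n) (uj vj uc vc : Fin (2 * G.n)),
      G'.head (e j) = φ uj → G'.foot (e j) = φ vj → G'.head (e c) = φ uc →
      G'.foot (e c) = φ vc → c ≠ j →
      (if G'.crosses (e j) (e c) then G'.sign (e c) * G'.inter (e j) (e c) else 0)
        = (if (arc uj.1 vj.1 uc.1 != arc uj.1 vj.1 vc.1)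
            then G.sign c * (if arc uj.1 vj.1 uc.1 then 1 else -1) else 0) := by
    intro j c uj vj uc vc h1 h2 h3 h4 hcj
    have hne : e c ≠ e j := fun hh => hcj (hE.1 hh)
    unfold GaussDiagram.crosses GaussDiagram.inter
    rw [h1, h2, h3, h4, ← hφ uj vj uc, ← hφ uj vj vc, bne_iff_ne.mpr hne, Bool.true_and,
      hsgn c]
  have hGterm : ∀ j c : Fin G.n, c ≠ j →
      (if G.crosses j c then G.sign c * G.inter j c else 0)
        = (if (arc (G.head j).1 (G.foot j).1 (G.head c).1 !=
              arc (G.head j).1 (G.foot j).1 (G.foot c).1)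
            then G.sign c * (if arc (G.head j).1 (G.foot j).1 (G.head c).1 then 1 else -1)
            else 0) := by
    intro j c hcj
    unfold GaussDiagram.crosses GaussDiagram.inter
    rw [bne_iff_ne.mpr hcj, Bool.true_and]
  -- termwise transport for an unmoved base chord
  have tw : ∀ j c : Fin G.n, j ≠ x → j ≠ y → j ≠ z →
      (if G'.crosses (e j) (e c) then G'.sign (e c) * G'.inter (e j) (e c) else 0)
        = (if G.crosses j c then G.sign c * G.inter j c else 0) := by
    intro j c hj1 hj2 hj3
    by_cases hcj : c = j
    · subst hcj; rw [crossTerm_self G' (e c), crossTerm_self G c]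
    · obtain ⟨hhj, hfj⟩ := hout j hj1 hj2 hj3
      by_cases hcx : c = x
      · rw [hcx]
        rw [hG'term j x (G.head j) (G.foot j) (G.head y) (G.foot z) hhj hfj hsx hsfx (hcx ▸ hcj),
          hGterm j x (hcx ▸ hcj),
          bshift (G.head j) (G.foot j) (G.head y) (G.head x) (nadj_symm na1)
            (vne (hP.head_ne_head hj2)) (vne (hP.head_ne_head hj1))
            (vne (Ne.symm (hP.head_ne_foot y j))) (vne (Ne.symm (hP.head_ne_foot x j))),
          bshift (G.head j) (G.foot j) (G.foot z) (G.foot x) (nadj_symm na2)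
            (vne (hP.head_ne_foot j z)) (vne (hP.head_ne_foot j x))
            (vne (hP.foot_ne_foot hj3)) (vne (hP.foot_ne_foot hj1))]
      · by_cases hcy : c = y
        · rw [hcy]
          rw [hG'term j y (G.head j) (G.foot j) (G.head x) (G.head z) hhj hfj hsy hsfy (hcy ▸ hcj),
            hGterm j y (hcy ▸ hcj),
            bshift (G.head j) (G.foot j) (G.head x) (G.head y) na1
              (vne (hP.head_ne_head hj1)) (vne (hP.head_ne_head hj2))
              (vne (Ne.symm (hP.head_ne_foot x j))) (vne (Ne.symm (hP.head_ne_foot y j))),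
            bshift (G.head j) (G.foot j) (G.head z) (G.foot y) (nadj_symm na3)
              (vne (hP.head_ne_head hj3)) (vne (hP.head_ne_foot j y))
              (vne (Ne.symm (hP.head_ne_foot z j))) (vne (hP.foot_ne_foot hj2))]
        · by_cases hcz : c = z
          · rw [hcz]
            rw [hG'term j z (G.head j) (G.foot j) (G.foot y) (G.foot x) hhj hfj hshz hsfz (hcz ▸ hcj),
              hGterm j z (hcz ▸ hcj),
              bshift (G.head j) (G.foot j) (G.foot y) (G.head z) na3
                (vne (hP.head_ne_foot j y)) (vne (hP.head_ne_head hj3))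
                (vne (hP.foot_ne_foot hj2)) (vne (Ne.symm (hP.head_ne_foot z j))),
              bshift (G.head j) (G.foot j) (G.foot x) (G.foot z) na2
                (vne (hP.head_ne_foot j x)) (vne (hP.head_ne_foot j z))
                (vne (hP.foot_ne_foot hj1)) (vne (hP.foot_ne_foot hj3))]
          · obtain ⟨hhc, hfc⟩ := hout c hcx hcy hcz
            rw [hG'term j c (G.head j) (G.foot j) (G.head c) (G.foot c) hhj hfj hhc hfc hcj,
              hGterm j c hcj]
  have hparOut : ∀ j, j ≠ x → j ≠ y → j ≠ z → G'.parity (e j) = G.parity j := by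
    intro j hj1 hj2 hj3
    unfold GaussDiagram.parity
    rw [← Function.Bijective.sum_comp hE
      fun c' => if G'.crosses (e j) c' then G'.sign c' * G'.inter (e j) c' else 0]
    exact Finset.sum_congr rfl fun c _ => tw j c hj1 hj2 hj3
  -- termwise transport of outside chords against the triangle chords
  have twX : ∀ c : Fin G.n, c ≠ x → c ≠ y → c ≠ z →
      (if G'.crosses (e x) (e c) then G'.sign (e c) * G'.inter (e x) (e c) else 0)
        = (if G.crosses x c then G.sign c * G.inter x c else 0) := by
    intro c hc1 hc2 hc3
    obtain ⟨hhc, hfc⟩ := hout c hc1 hc2 hc3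
    rw [hG'term x c (G.head y) (G.foot z) (G.head c) (G.foot c) hsx hsfx hhc hfc hc1,
      hGterm x c hc1,
      bmove (G.head y) (G.head x) (G.foot z) (G.foot x) (G.head c) (nadj_symm na1)
        (nadj_symm na2) dbd dbc dad dac
        (vne (hP.head_ne_head (Ne.symm hc2))) (vne (hP.head_ne_head (Ne.symm hc1)))
        (vne (Ne.symm (hP.head_ne_foot c z))) (vne (Ne.symm (hP.head_ne_foot c x))),
      bmove (G.head y) (G.head x) (G.foot z) (G.foot x) (G.foot c) (nadj_symm na1)
        (nadj_symm na2) dbd dbc dad dac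
        (vne (hP.head_ne_foot y c)) (vne (hP.head_ne_foot x c))
        (vne (hP.foot_ne_foot (Ne.symm hc3))) (vne (hP.foot_ne_foot (Ne.symm hc1)))]
  have twY : ∀ c : Fin G.n, c ≠ x → c ≠ y → c ≠ z →
      (if G'.crosses (e y) (e c) then G'.sign (e c) * G'.inter (e y) (e c) else 0)
        = (if G.crosses y c then G.sign c * G.inter y c else 0) := by
    intro c hc1 hc2 hc3
    obtain ⟨hhc, hfc⟩ := hout c hc1 hc2 hc3
    rw [hG'term y c (G.head x) (G.head z) (G.head c) (G.foot c) hsy hsfy hhc hfc hc2,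
      hGterm y c hc2,
      bmove (G.head x) (G.head y) (G.head z) (G.foot y) (G.head c) na1 (nadj_symm na3)
        daq dap dbq dbp
        (vne (hP.head_ne_head (Ne.symm hc1))) (vne (hP.head_ne_head (Ne.symm hc2)))
        (vne (hP.head_ne_head (Ne.symm hc3))) (vne (Ne.symm (hP.head_ne_foot c y))),
      bmove (G.head x) (G.head y) (G.head z) (G.foot y) (G.foot c) na1 (nadj_symm na3)
        daq dap dbq dbp
        (vne (hP.head_ne_foot x c)) (vne (hP.head_ne_foot y c))
        (vne (hP.head_ne_foot z c)) (vne (hP.foot_ne_foot (Ne.symm hc2)))]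
  have twZ : ∀ c : Fin G.n, c ≠ x → c ≠ y → c ≠ z →
      (if G'.crosses (e z) (e c) then G'.sign (e c) * G'.inter (e z) (e c) else 0)
        = (if G.crosses z c then G.sign c * G.inter z c else 0) := by
    intro c hc1 hc2 hc3
    obtain ⟨hhc, hfc⟩ := hout c hc1 hc2 hc3
    rw [hG'term z c (G.foot y) (G.foot x) (G.head c) (G.foot c) hshz hsfz hhc hfc hc3,
      hGterm z c hc3,
      bmove (G.foot y) (G.head z) (G.foot x) (G.foot z) (G.head c) na3 na2
        dcp.symm ddp.symm dcq.symm ddq.symm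
        (vne (Ne.symm (hP.head_ne_foot c y))) (vne (hP.head_ne_head (Ne.symm hc3)))
        (vne (Ne.symm (hP.head_ne_foot c x))) (vne (Ne.symm (hP.head_ne_foot c z))),
      bmove (G.foot y) (G.head z) (G.foot x) (G.foot z) (G.foot c) na3 na2
        dcp.symm ddp.symm dcq.symm ddq.symm
        (vne (hP.foot_ne_foot (Ne.symm hc2))) (vne (hP.head_ne_foot z c))
        (vne (hP.foot_ne_foot (Ne.symm hc1))) (vne (hP.foot_ne_foot (Ne.symm hc3)))]
  have sum3 : ∀ g : Fin G.n → ℤ, (∀ c, c ≠ x → c ≠ y → c ≠ z → g c = 0) →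
      ∑ c, g c = g x + g y + g z := by
    intro g hg
    have h1 : ∑ c, g c = ∑ c ∈ ({x, y, z} : Finset (Fin G.n)), g c := by
      refine (Finset.sum_subset (Finset.subset_univ _) ?_).symm
      intro c _ hc
      simp only [Finset.mem_insert, Finset.mem_singleton, not_or] at hc
      exact hg c hc.1 hc.2.1 hc.2.2
    rw [h1, Finset.sum_insert (by simp [hxy, hxz]), Finset.sum_insert (by simp [hyz]),
      Finset.sum_singleton]
    ring
  have neyx : e x ≠ e y := fun hh => hxy (hE.1 hh)
  have nezx : e x ≠ e z := fun hh => hxz (hE.1 hh)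
  have nezy : e y ≠ e z := fun hh => hyz (hE.1 hh)
  have hparX : G'.parity (e x) = G.parity x := by
    unfold GaussDiagram.parity
    rw [← Function.Bijective.sum_comp hE
      fun c' => if G'.crosses (e x) c' then G'.sign c' * G'.inter (e x) c' else 0]
    rw [← sub_eq_zero, ← Finset.sum_sub_distrib]
    rw [sum3 _ (fun c h1 h2 h3 => by rw [twX c h1 h2 h3, sub_self])]
    rw [crossTerm_self G' (e x), crossTerm_self G x,
      crossTerm G' (e x) (e y) nexy, crossTerm G' (e x) (e z) nexz,
      crossTerm G x y (Ne.symm hxy), crossTerm G x z (Ne.symm hxz),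
      hsx, hsfx, hsy, hsfy, hshz, hsfz, hsgn y, hsgn z]
    simp only [CrTφ]
    linarith [htri.1]
  have hparY : G'.parity (e y) = G.parity y := by
    unfold GaussDiagram.parity
    rw [← Function.Bijective.sum_comp hE
      fun c' => if G'.crosses (e y) c' then G'.sign c' * G'.inter (e y) c' else 0]
    rw [← sub_eq_zero, ← Finset.sum_sub_distrib]
    rw [sum3 _ (fun c h1 h2 h3 => by rw [twY c h1 h2 h3, sub_self])]
    rw [crossTerm_self G' (e y), crossTerm_self G y,
      crossTerm G' (e y) (e x) neyx, crossTerm G' (e y) (e z) neyz,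
      crossTerm G y x hxy, crossTerm G y z (Ne.symm hyz),
      hsx, hsfx, hsy, hsfy, hshz, hsfz, hsgn x, hsgn z]
    simp only [CrTφ]
    linarith [htri.2.1]
  have hparZ : G'.parity (e z) = G.parity z := by
    unfold GaussDiagram.parity
    rw [← Function.Bijective.sum_comp hE
      fun c' => if G'.crosses (e z) c' then G'.sign c' * G'.inter (e z) c' else 0]
    rw [← sub_eq_zero, ← Finset.sum_sub_distrib]
    rw [sum3 _ (fun c h1 h2 h3 => by rw [twZ c h1 h2 h3, sub_self])]
    rw [crossTerm_self G' (e z), crossTerm_self G z,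
      crossTerm G' (e z) (e x) nezx, crossTerm G' (e z) (e y) nezy,
      crossTerm G z x hxz, crossTerm G z y hyz,
      hsx, hsfx, hsy, hsfy, hshz, hsfz, hsgn x, hsgn y]
    simp only [CrTφ]
    linarith [htri.2.2]
  unfold GaussDiagram.cardV
  rw [← Function.Bijective.sum_comp hE fun c => if |G'.parity c| = i then G'.sign c else 0]
  refine Eq.symm (Finset.sum_congr rfl fun c _ => ?_)
  have hp : G'.parity (e c) = G.parity c := by
    by_cases h1 : c = x
    · subst h1; exact hparX
    · by_cases h2 : c = y
      · subst h2; exact hparY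
      · by_cases h3 : c = z
        · subst h3; exact hparZ
        · exact hparOut c h1 h2 h3
  rw [hp, hsgn c]

end GaussDiagram
namespace GaussDiagram

lemma cardVTuple_eq_prod (G : GaussDiagram) {k : ℕ} (Z : Fin k → ℤ) :
    G.cardVTuple Z = ∏ j, G.cardV (Z j) := by
  unfold GaussDiagram.cardVTuple GaussDiagram.cardV
  rw [Finset.prod_univ_sum, Fintype.piFinset_univ]
  refine Finset.sum_congr rfl fun t _ => ?_
  by_cases h : ∀ j, |G.parity (t j)| = Z j
  · rw [if_pos h]
    exact Finset.prod_congr rfl fun j _ => (if_pos (h j)).symm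
  · rw [if_neg h]
    push_neg at h
    obtain ⟨j0, hj0⟩ := h
    refine (Finset.prod_eq_zero (Finset.mem_univ j0) ?_).symm
    exact if_neg hj0

lemma cardV_gaussMove {G G' : GaussDiagram} (h : GaussMove G G') {i : ℤ} (hi : i ≠ 0) :
    G.cardV i = G'.cardV i := by
  rcases h with h | h | h | h | h | h
  · exact cardV_single h hi
  · exact (cardV_single h hi).symm
  · exact cardV_two h i
  · exact (cardV_two h i).symm
  · exact cardV_triangle h i
  · exact (cardV_triangle h i).symm

end GaussDiagram

/-- For `i > 0` and `Z = (z₁, …, z_n)` with `0 < z₁ < … < z_n`, the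
signed cardinalities `|V_i|` and `|V_Z|` are unchanged by a single chord move, a two chord
move or a triangle move — hence by any finite sequence of chord moves. -/
theorem cardV_and_cardVTuple_invariant (i : ℤ) (hi : 0 < i)
    {n : ℕ} (Z : Fin n → ℤ) (hpos : ∀ j, 0 < Z j) (hmono : StrictMono Z)
    (G G' : GaussDiagram) (h : Relation.ReflTransGen GaussMove G G') :
    G.cardV i = G'.cardV i ∧ G.cardVTuple Z = G'.cardVTuple Z := by
  induction h with
  | refl => exact ⟨rfl, rfl⟩
  | tail hab hbc ih =>
    obtain ⟨ih1, ih2⟩ := ih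
    refine ⟨ih1.trans (GaussDiagram.cardV_gaussMove hbc hi.ne'), ih2.trans ?_⟩
    rw [GaussDiagram.cardVTuple_eq_prod, GaussDiagram.cardVTuple_eq_prod]
    exact Finset.prod_congr rfl fun j _ =>
      GaussDiagram.cardV_gaussMove hbc (hpos j).ne'
end
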